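/- arXiv:1512.05728 — 3 statements merged into one kernel-verified Lean document; each statement's English description precedes it below -/
import Mathlib

section
/- Let (Ω,Σ) be a measurable space, X a real Banach space and m : Σ → X a σ-additive vector measure. Suppose {fₙ} ⊆ L¹(m) is a sequence and f : Ω → ℝ a measurable function such that (a) fₙ(x) → f(x) for ‖m‖-almost every x ∈ Ω, and (b) for each A ∈ Σ the sequence {∫_A fₙ dm} is convergent in X. Then f ∈ L¹(m) and fₙ → f in the norm of L¹(m). -/
open MeasureTheory Filter Topology
open scoped ENNReal

noncomputable section

section VHSBlock
open MeasureTheory Set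
open scoped symmDiff
set_option linter.unusedSectionVars false

namespace VHSAux

variable {Ω : Type*} [MeasurableSpace Ω]

/-- Measurable sets, to be equipped with the `lam (A ∆ B)` pseudo-emetric. -/
structure MSet (lam : Measure Ω) where
  carrier : Set Ω
  meas : MeasurableSet carrier

variable {lam : Measure Ω}

instance : PseudoEMetricSpace (MSet lam) where
  edist A B := lam (A.carrier ∆ B.carrier)
  edist_self A := by simp
  edist_comm A B := by simp [symmDiff_comm]
  edist_triangle A B C := by
    refine le_trans (measure_mono (symmDiff_triangle _ _ _)) (measure_union_le _ _)

lemma edist_def (A B : MSet lam) : edist A B = lam (A.carrier ∆ B.carrier) := rfl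

instance : Nonempty (MSet lam) := ⟨⟨∅, MeasurableSet.empty⟩⟩

lemma flip_lemma (u : ℕ → Set Ω) {a b : ℕ} (hab : a ≤ b) {ω : Ω}
    (h : ω ∈ u a ↔ ω ∉ u b) : ∃ k, a ≤ k ∧ k < b ∧ ω ∈ u k ∆ u (k + 1) := by
  induction b, hab using Nat.le_induction with
  | base => tauto
  | succ b hab ih =>
    by_cases hb : ω ∈ u b
    · by_cases hb1 : ω ∈ u (b + 1)
      · obtain ⟨k, h1, h2, h3⟩ := ih (by tauto)
        exact ⟨k, h1, h2.trans (Nat.lt_succ_self b), h3⟩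
      · exact ⟨b, hab, Nat.lt_succ_self b, by simp [Set.mem_symmDiff]; tauto⟩
    · by_cases hb1 : ω ∈ u (b + 1)
      · exact ⟨b, hab, Nat.lt_succ_self b, by simp [Set.mem_symmDiff]; tauto⟩
      · obtain ⟨k, h1, h2, h3⟩ := ih (by tauto)
        exact ⟨k, h1, h2.trans (Nat.lt_succ_self b), h3⟩

instance complete [IsFiniteMeasure lam] : CompleteSpace (MSet lam) := by
  apply EMetric.complete_of_convergent_controlled_sequences (fun n => (2 : ℝ≥0∞)⁻¹ ^ n)
    (fun n => ENNReal.pow_pos (by norm_num) n)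
  intro u hu
  set L : Set Ω := ⋂ N, ⋃ k, ⋃ _ : N ≤ k, (u k).carrier with hL
  have hLm : MeasurableSet L := by
    exact MeasurableSet.iInter fun N => MeasurableSet.iUnion fun k =>
      MeasurableSet.iUnion fun _ => (u k).meas
  refine ⟨⟨L, hLm⟩, ?_⟩
  have key : ∀ n, (u n).carrier ∆ L ⊆ ⋃ j : ℕ, (u (n + j)).carrier ∆ (u (n + j + 1)).carrier := by
    intro n ω hω
    rw [Set.mem_symmDiff] at hω
    obtain ⟨h1, h2⟩ | ⟨h1, h2⟩ := hω
    · -- ω ∈ u n, ω ∉ L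
      rw [hL, Set.mem_iInter] at h2
      push_neg at h2
      obtain ⟨N, hN⟩ := h2
      simp only [Set.mem_iUnion, not_exists] at hN
      have hb : ω ∉ (u (max n N)).carrier := fun hc => hN (max n N) (le_max_right _ _) hc
      obtain ⟨k, hk1, hk2, hk3⟩ := flip_lemma (fun k => (u k).carrier) (le_max_left n N)
        (by tauto)
      exact Set.mem_iUnion.2 ⟨k - n, by rwa [Nat.add_sub_cancel' hk1]⟩
    · -- ω ∈ L, ω ∉ u n
      rw [hL, Set.mem_iInter] at h1
      have := h1 n
      simp only [Set.mem_iUnion] at this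
      obtain ⟨k, hkn, hk⟩ := this
      obtain ⟨j, hj1, hj2, hj3⟩ := flip_lemma (fun k => (u k).carrier) hkn (by tauto)
      exact Set.mem_iUnion.2 ⟨j - n, by rwa [Nat.add_sub_cancel' hj1]⟩
  have hbound : ∀ n, edist (u n) (⟨L, hLm⟩ : MSet lam) ≤ (2 : ℝ≥0∞)⁻¹ ^ n * 2 := by
    intro n
    rw [edist_def]
    refine le_trans (measure_mono (key n)) ?_
    refine le_trans (measure_iUnion_le _) ?_
    have : ∀ j : ℕ, lam ((u (n + j)).carrier ∆ (u (n + j + 1)).carrier)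
        ≤ (2 : ℝ≥0∞)⁻¹ ^ (n + j) :=
      fun j => le_of_lt (hu (n + j) (n + j) (n + j + 1) le_rfl (Nat.le_succ _))
    refine le_trans (ENNReal.tsum_le_tsum this) ?_
    have : ∀ j : ℕ, (2 : ℝ≥0∞)⁻¹ ^ (n + j) = (2 : ℝ≥0∞)⁻¹ ^ n * (2 : ℝ≥0∞)⁻¹ ^ j :=
      fun j => pow_add _ _ _
    rw [tsum_congr this, ENNReal.tsum_mul_left, ENNReal.tsum_geometric]
    gcongr
    rw [ENNReal.one_sub_inv_two]
    simp
  rw [EMetric.tendsto_atTop]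
  intro ε hε
  have h0 : Tendsto (fun n : ℕ => (2 : ℝ≥0∞)⁻¹ ^ n * 2) atTop (𝓝 0) := by
    have := ENNReal.Tendsto.mul_const
      (ENNReal.tendsto_pow_atTop_nhds_zero_of_lt_one (by norm_num : (2 : ℝ≥0∞)⁻¹ < 1))
      (Or.inr (by norm_num : (2 : ℝ≥0∞) ≠ ⊤))
    simpa using this
  have hε' : (0 : ℝ≥0∞) < min ε 1 := lt_min hε (by norm_num)
  obtain ⟨N, hN⟩ := (ENNReal.tendsto_atTop_zero.1 h0) (min ε 1 / 2)
    (by simpa using ENNReal.half_pos hε'.ne')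
  refine ⟨N, fun n hn => lt_of_le_of_lt (hbound n) ?_⟩
  refine lt_of_le_of_lt (hN n hn) (lt_of_lt_of_le ?_ (min_le_left ε 1))
  exact ENNReal.half_lt_self hε'.ne' (ne_top_of_le_ne_top (by norm_num) (min_le_right _ _))

theorem vhs (lam : Measure Ω) [IsFiniteMeasure lam] (ρ : ℕ → Set Ω → ℝ)
    (hadd : ∀ n A B, MeasurableSet A → MeasurableSet B → Disjoint A B →
      ρ n (A ∪ B) = ρ n A + ρ n B)
    (hac : ∀ n, ∀ ε : ℝ, 0 < ε → ∃ δ : ℝ, 0 < δ ∧ ∀ A, MeasurableSet A →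
      lam A < ENNReal.ofReal δ → |ρ n A| ≤ ε)
    (hcauchy : ∀ A, MeasurableSet A → CauchySeq (fun n => ρ n A))
    {ε : ℝ} (hε : 0 < ε) :
    ∃ δ : ℝ, 0 < δ ∧ ∀ A, MeasurableSet A → lam A < ENNReal.ofReal δ → ∀ n, |ρ n A| ≤ ε := by
  classical
  -- continuity of `ρ n` on the measure algebra
  have hcont : ∀ n, Continuous (fun A : MSet lam => ρ n A.carrier) := by
    intro n
    rw [continuous_iff_continuousAt]
    intro A₀
    rw [ContinuousAt, (EMetric.nhds_basis_eball).tendsto_iff (Metric.nhds_basis_closedBall)]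
    intro η hη
    obtain ⟨δ, hδ, hδ2⟩ := hac n (η / 2) (half_pos hη)
    refine ⟨ENNReal.ofReal δ, by simpa using hδ, fun A hA => ?_⟩
    rw [EMetric.mem_ball, edist_def] at hA
    have hsplit : ∀ B C : Set Ω, MeasurableSet B → MeasurableSet C →
        ρ n B = ρ n (B ∩ C) + ρ n (B \ C) := by
      intro B C hB hC
      rw [← hadd n _ _ (hB.inter hC) (hB.diff hC) Set.disjoint_sdiff_inter.symm,
        Set.inter_union_diff]
    have e1 := hsplit A.carrier A₀.carrier A.meas A₀.meas
    have e2 := hsplit A₀.carrier A.carrier A₀.meas A.meas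
    rw [Set.inter_comm] at e2
    have b1 : |ρ n (A.carrier \ A₀.carrier)| ≤ η / 2 := by
      refine hδ2 _ (A.meas.diff A₀.meas) (lt_of_le_of_lt (measure_mono ?_) hA)
      exact fun x hx => Set.mem_symmDiff.2 (Or.inl ⟨hx.1, hx.2⟩)
    have b2 : |ρ n (A₀.carrier \ A.carrier)| ≤ η / 2 := by
      refine hδ2 _ (A₀.meas.diff A.meas) (lt_of_le_of_lt (measure_mono ?_) hA)
      exact fun x hx => Set.mem_symmDiff.2 (Or.inr ⟨hx.1, hx.2⟩)
    rw [Metric.mem_closedBall, Real.dist_eq]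
    have : ρ n A.carrier - ρ n A₀.carrier
        = ρ n (A.carrier \ A₀.carrier) - ρ n (A₀.carrier \ A.carrier) := by
      rw [e1, e2]; ring
    rw [this]
    calc |ρ n (A.carrier \ A₀.carrier) - ρ n (A₀.carrier \ A.carrier)|
        ≤ |ρ n (A.carrier \ A₀.carrier)| + |ρ n (A₀.carrier \ A.carrier)| := abs_sub _ _
      _ ≤ η / 2 + η / 2 := add_le_add b1 b2
      _ = η := by ring
  -- the closed sets
  set E : ℕ → Set (MSet lam) :=
    fun N => {A | ∀ n, N ≤ n → |ρ n A.carrier - ρ N A.carrier| ≤ ε / 8} with hE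
  have hEclosed : ∀ N, IsClosed (E N) := by
    intro N
    have : E N = ⋂ n, ⋂ _ : N ≤ n, {A : MSet lam | |ρ n A.carrier - ρ N A.carrier| ≤ ε / 8} := by
      ext A; simp [hE]
    rw [this]
    refine isClosed_iInter fun n => isClosed_iInter fun _ => ?_
    exact isClosed_le (Continuous.abs ((hcont n).sub (hcont N))) continuous_const
  have hEcover : ⋃ N, E N = Set.univ := by
    ext A
    simp only [Set.mem_iUnion, Set.mem_univ, iff_true]
    obtain ⟨N, hN⟩ := Metric.cauchySeq_iff'.1 (hcauchy A.carrier A.meas) (ε / 8)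
      (by positivity)
    exact ⟨N, fun n hn => le_of_lt (by simpa [Real.dist_eq] using hN n hn)⟩
  obtain ⟨N, hN⟩ := nonempty_interior_of_iUnion_of_closed hEclosed hEcover
  obtain ⟨A₀, hA₀⟩ := hN
  rw [mem_interior_iff_mem_nhds, EMetric.mem_nhds_iff] at hA₀
  obtain ⟨r, hr, hball⟩ := hA₀
  -- choose the real radius
  set δ₁ : ℝ := (min r 1).toReal with hδ₁
  have hδ₁pos : 0 < δ₁ := by
    rw [hδ₁]
    refine ENNReal.toReal_pos ?_ ?_
    · exact (lt_min hr (by norm_num)).ne'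
    · exact ne_top_of_le_ne_top (by simp) (min_le_right _ _)
  have hδ₁le : ENNReal.ofReal δ₁ ≤ r := by
    rw [hδ₁, ENNReal.ofReal_toReal (ne_top_of_le_ne_top (by simp) (min_le_right _ _))]
    exact min_le_left _ _
  obtain ⟨δ₂, hδ₂pos, hδ₂⟩ := hac N (ε / 2) (half_pos hε)
  choose d hd hd2 using fun n => hac n ε hε
  set δ : ℝ := min (min δ₁ δ₂) ((Finset.range (N + 1)).inf' ⟨0, by simp⟩ d) with hδdef
  have hδpos : 0 < δ := by
    rw [hδdef]
    refine lt_min (lt_min hδ₁pos hδ₂pos) ?_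
    obtain ⟨i, -, hi⟩ := Finset.exists_mem_eq_inf' (s := Finset.range (N + 1)) ⟨0, by simp⟩ d
    exact lt_of_lt_of_eq (hd i) hi.symm
  refine ⟨δ, hδpos, fun A hA hAlam => ?_⟩
  intro n
  rcases lt_or_ge n (N + 1) with hn | hn
  · refine hd2 n A hA (lt_of_lt_of_le hAlam ?_)
    refine ENNReal.ofReal_le_ofReal ?_
    exact le_trans (min_le_right _ _) (Finset.inf'_le _ (Finset.mem_range.2 hn))
  · -- n ≥ N + 1 > N
    have hnN : N ≤ n := le_trans (Nat.le_succ N) hn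
    have hδle : ENNReal.ofReal δ ≤ r := by
      refine le_trans (ENNReal.ofReal_le_ofReal ?_) hδ₁le
      exact le_trans (min_le_left _ _) (min_le_left _ _)
    set A₁ : MSet lam := ⟨A₀.carrier ∪ A, A₀.meas.union hA⟩ with hA₁
    set A₂ : MSet lam := ⟨A₀.carrier \ A, A₀.meas.diff hA⟩ with hA₂
    have hA₁ball : A₁ ∈ E N := by
      refine hball ?_
      rw [EMetric.mem_ball, edist_def]
      refine lt_of_le_of_lt (measure_mono ?_) (lt_of_lt_of_le hAlam hδle)
      intro x hx
      rw [Set.mem_symmDiff] at hx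
      rcases hx with ⟨hx1, hx2⟩ | ⟨hx1, hx2⟩
      · exact hx1.resolve_left hx2
      · exact absurd (Or.inl hx1) hx2
    have hA₂ball : A₂ ∈ E N := by
      refine hball ?_
      rw [EMetric.mem_ball, edist_def]
      refine lt_of_le_of_lt (measure_mono ?_) (lt_of_lt_of_le hAlam hδle)
      intro x hx
      rw [Set.mem_symmDiff] at hx
      rcases hx with ⟨hx1, hx2⟩ | ⟨hx1, hx2⟩
      · exact absurd hx1.1 hx2
      · by_contra hxA
        exact hx2 ⟨hx1, hxA⟩
    have hsplit : ∀ m, ρ m A₁.carrier = ρ m A₂.carrier + ρ m A := by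
      intro m
      have : A₁.carrier = (A₀.carrier \ A) ∪ A := by
        rw [Set.diff_union_self]
      rw [this, hadd m _ _ (A₀.meas.diff hA) hA Set.disjoint_sdiff_left]
    have key : |ρ n A - ρ N A| ≤ ε / 4 := by
      have h1 : ρ n A - ρ N A = (ρ n A₁.carrier - ρ N A₁.carrier)
          - (ρ n A₂.carrier - ρ N A₂.carrier) := by
        linarith [hsplit n, hsplit N]
      rw [h1]
      calc |(ρ n A₁.carrier - ρ N A₁.carrier) - (ρ n A₂.carrier - ρ N A₂.carrier)|
          ≤ |ρ n A₁.carrier - ρ N A₁.carrier| + |ρ n A₂.carrier - ρ N A₂.carrier| := abs_sub _ _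
        _ ≤ ε / 8 + ε / 8 := add_le_add (hA₁ball n hnN) (hA₂ball n hnN)
        _ = ε / 4 := by ring
    have hNA : |ρ N A| ≤ ε / 2 := by
      refine hδ₂ A hA (lt_of_lt_of_le hAlam (ENNReal.ofReal_le_ofReal ?_))
      exact le_trans (min_le_left _ _) (min_le_right _ _)
    calc |ρ n A| = |(ρ n A - ρ N A) + ρ N A| := by ring_nf
      _ ≤ |ρ n A - ρ N A| + |ρ N A| := abs_add_le _ _
      _ ≤ ε / 4 + ε / 2 := add_le_add key hNA
      _ ≤ ε := by linarith

end VHSAux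
end VHSBlock

namespace Paper

variable {Ω : Type*} [MeasurableSpace Ω]
variable {X : Type*} [NormedAddCommGroup X] [NormedSpace ℝ X]

/-- The signed measure `x* ∘ m` for a functional `x*` and vector measure `m`. -/
def dualApply (m : VectorMeasure Ω X) (x : X →L[ℝ] ℝ) : SignedMeasure Ω :=
  m.mapRange x.toLinearMap.toAddMonoidHom x.continuous

/-- The semivariation `‖m‖(A)` of a vector measure. -/
def semivar (m : VectorMeasure Ω X) (A : Set Ω) : ℝ≥0∞ :=
  ⨆ x : {x : X →L[ℝ] ℝ // ‖x‖ ≤ 1}, (dualApply m x.1).totalVariation A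

/-- `P` holds `‖m‖`-almost everywhere. -/
def MAE (m : VectorMeasure Ω X) (P : Ω → Prop) : Prop :=
  ∃ N : Set Ω, MeasurableSet N ∧ semivar m N = 0 ∧ ∀ ω ∉ N, P ω

/-- The integral `∫_A f ds` of a real function with respect to a signed measure. -/
def sIntegral (s : SignedMeasure Ω) (f : Ω → ℝ) (A : Set Ω) : ℝ :=
  (∫ ω in A, f ω ∂s.toJordanDecomposition.posPart) -
    ∫ ω in A, f ω ∂s.toJordanDecomposition.negPart

/-- `f` is integrable with respect to the vector measure `m` (Bartle-Dunford-Schwartz). -/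
def MIntegrable (m : VectorMeasure Ω X) (f : Ω → ℝ) : Prop :=
  Measurable f ∧
  (∀ x : X →L[ℝ] ℝ, Integrable f ((dualApply m x).totalVariation)) ∧
  (∀ A : Set Ω, MeasurableSet A →
    ∃ v : X, ∀ x : X →L[ℝ] ℝ, x v = sIntegral (dualApply m x) f A)

open Classical in
/-- The vector integral `∫_A f dm ∈ X`. -/
def mIntegral (m : VectorMeasure Ω X) (f : Ω → ℝ) (A : Set Ω) : X :=
  if h : ∃ v : X, ∀ x : X →L[ℝ] ℝ, x v = sIntegral (dualApply m x) f A then h.choose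
  else 0

/-- The norm of `L¹(m)`: `‖f‖ = sup_{‖x*‖ ≤ 1} ∫ |f| d|x*m|`. -/
def mNorm (m : VectorMeasure Ω X) (f : Ω → ℝ) : ℝ :=
  ⨆ x : {x : X →L[ℝ] ℝ // ‖x‖ ≤ 1}, ∫ ω, |f ω| ∂(dualApply m x.1).totalVariation

/-- The vector measure `m` is separable: the pseudometric space `(Σ, d_m)`,
`d_m(A,B) = ‖m‖(A △ B)`, is separable. -/
def SeparableVM (m : VectorMeasure Ω X) : Prop :=
  ∃ D : Set (Set Ω), D.Countable ∧ (∀ B ∈ D, MeasurableSet B) ∧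
    ∀ A : Set Ω, MeasurableSet A → ∀ ε : ℝ, 0 < ε →
      ∃ B ∈ D, semivar m (symmDiff A B) < ENNReal.ofReal ε

section FunctionSpace

variable {S : Type*} [MeasurableSpace S]

/-- `T` is a bounded linear functional on the function space determined by the
membership predicate `mem` and the norm `nrm`. -/
def IsBddLinFunctional (mem : (S → ℝ) → Prop) (nrm : (S → ℝ) → ℝ)
    (T : (S → ℝ) → ℝ) : Prop :=
  (∀ f g, mem f → mem g → T (f + g) = T f + T g) ∧
  (∀ (c : ℝ) (f), mem f → T (c • f) = c * T f) ∧
  (∃ C : ℝ, ∀ f, mem f → |T f| ≤ C * nrm f)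

/-- `f` is a weakly null sequence in the function space `(mem, nrm)`. -/
def WeaklyNullSeq (mem : (S → ℝ) → Prop) (nrm : (S → ℝ) → ℝ) (f : ℕ → S → ℝ) : Prop :=
  ∀ T : (S → ℝ) → ℝ, IsBddLinFunctional mem nrm T →
    Tendsto (fun n => T (f n)) atTop (nhds 0)

/-- The set `K` has uniformly absolutely continuous norm in the function space with
norm `nrm` over the measure `μ`. -/
def UnifACNorm (μ : Measure S) (nrm : (S → ℝ) → ℝ) (K : Set (S → ℝ)) : Prop :=
  ∀ ε : ℝ, 0 < ε → ∃ δ : ℝ, 0 < δ ∧ ∀ A : Set S, MeasurableSet A →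
    μ A < ENNReal.ofReal δ → ∀ f ∈ K, nrm (A.indicator f) ≤ ε

/-- The subsequence splitting property for the function space `(mem, nrm)` over `μ`. -/
def HasSSP (μ : Measure S) (mem : (S → ℝ) → Prop) (nrm : (S → ℝ) → ℝ) : Prop :=
  ∀ f : ℕ → S → ℝ, (∀ n, mem (f n)) → (∃ C : ℝ, ∀ n, nrm (f n) ≤ C) →
    ∃ σ : ℕ → ℕ, StrictMono σ ∧
      ∃ g h : ℕ → S → ℝ,
        (∀ n, mem (g n)) ∧ (∀ n, mem (h n)) ∧
        (∀ n, f (σ n) = g n + h n) ∧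
        (∀ n, (fun s => g n s * h n s) =ᵐ[μ] 0) ∧
        UnifACNorm μ nrm (Set.range g) ∧
        (∀ i j, i ≠ j → (fun s => h i s * h j s) =ᵐ[μ] 0)

/-- The weak Banach-Saks property for the function space `(mem, nrm)`. -/
def HasWBS (mem : (S → ℝ) → Prop) (nrm : (S → ℝ) → ℝ) : Prop :=
  ∀ f : ℕ → S → ℝ, (∀ n, mem (f n)) → WeaklyNullSeq mem nrm f →
    ∃ σ : ℕ → ℕ, StrictMono σ ∧
      Tendsto (fun n : ℕ => nrm ((n : ℝ)⁻¹ • ∑ k ∈ Finset.range n, f (σ k))) atTop (nhds 0)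

end FunctionSpace

/-- A Banach function space over `(S, μ)`: an (abstract) normed space `X` together with
a linear embedding `J` into measurable functions on `S`, separating points modulo
`μ`-null sets and satisfying the ideal property. -/
structure BFS (S : Type*) [MeasurableSpace S] (μ : Measure S)
    (X : Type*) [NormedAddCommGroup X] [NormedSpace ℝ X] where
  J : X →ₗ[ℝ] (S → ℝ)
  aemeasurable : ∀ x : X, AEMeasurable (J x) μ
  eq_zero : ∀ x : X, J x =ᵐ[μ] 0 → x = 0
  ideal : ∀ (x : X) (g : S → ℝ), AEMeasurable g μ →
    (∀ᵐ s ∂μ, |g s| ≤ |J x s|) → ∃ y : X, J y =ᵐ[μ] g ∧ ‖y‖ ≤ ‖x‖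

variable {S : Type*} [MeasurableSpace S] {μ : Measure S}

/-- The set `K ⊆ X` has uniformly absolutely continuous norm in the B.f.s. `X`. -/
def BFS.UnifAC (B : BFS S μ X) (K : Set X) : Prop :=
  ∀ ε : ℝ, 0 < ε → ∃ δ : ℝ, 0 < δ ∧ ∀ A : Set S, MeasurableSet A →
    μ A < ENNReal.ofReal δ → ∀ x ∈ K, ∀ y : X, B.J y =ᵐ[μ] A.indicator (B.J x) → ‖y‖ ≤ ε

/-- The B.f.s. `X` has absolutely continuous norm. -/
def BFS.ACNorm (B : BFS S μ X) : Prop :=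
  ∀ x : X, ∀ ε : ℝ, 0 < ε → ∃ δ : ℝ, 0 < δ ∧ ∀ A : Set S, MeasurableSet A →
    μ A < ENNReal.ofReal δ → ∀ y : X, B.J y =ᵐ[μ] A.indicator (B.J x) → ‖y‖ ≤ ε

/-- The subsequence splitting property for the B.f.s. `X`. -/
def BFS.SSP (B : BFS S μ X) : Prop :=
  ∀ f : ℕ → X, (∃ C : ℝ, ∀ n, ‖f n‖ ≤ C) →
    ∃ σ : ℕ → ℕ, StrictMono σ ∧
      ∃ g h : ℕ → X,
        (∀ n, f (σ n) = g n + h n) ∧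
        (∀ n, (fun s => B.J (g n) s * B.J (h n) s) =ᵐ[μ] 0) ∧
        B.UnifAC (Set.range g) ∧
        (∀ i j, i ≠ j → (fun s => B.J (h i) s * B.J (h j) s) =ᵐ[μ] 0)

/-- The weak Banach-Saks property for a normed space `Z`: every weakly null sequence has a
subsequence whose arithmetic means converge to zero in norm. -/
def WeakBanachSaks (Z : Type*) [NormedAddCommGroup Z] [NormedSpace ℝ Z] : Prop :=
  ∀ z : ℕ → Z, (∀ φ : Z →L[ℝ] ℝ, Tendsto (fun n => φ (z n)) atTop (nhds 0)) →
    ∃ σ : ℕ → ℕ, StrictMono σ ∧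
      Tendsto (fun n : ℕ => ‖(n : ℝ)⁻¹ • ∑ k ∈ Finset.range n, z (σ k)‖) atTop (nhds 0)


section PaperLemmas

set_option linter.unusedSectionVars false

variable {Ω : Type*} [MeasurableSpace Ω]
variable {X : Type*} [NormedAddCommGroup X] [NormedSpace ℝ X]

instance totalVariation_finite (s : SignedMeasure Ω) : IsFiniteMeasure s.totalVariation := by
  unfold SignedMeasure.totalVariation
  infer_instance

lemma dualApply_apply (m : VectorMeasure Ω X) (x : X →L[ℝ] ℝ) (A : Set Ω) :
    dualApply m x A = x (m A) :=
  VectorMeasure.mapRange_apply _ x.continuous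

lemma setIntegral_of_measure_zero {μ : Measure Ω} {g : Ω → ℝ} {A : Set Ω} (h : μ A = 0) :
    ∫ ω in A, g ω ∂μ = 0 := by
  rw [Measure.restrict_eq_zero.2 h, integral_zero_measure]

lemma signed_apply_eq (s : SignedMeasure Ω) {A : Set Ω} (hA : MeasurableSet A) :
    s A = (s.toJordanDecomposition.posPart A).toReal
      - (s.toJordanDecomposition.negPart A).toReal := by
  conv_lhs => rw [← s.toSignedMeasure_toJordanDecomposition, JordanDecomposition.toSignedMeasure]
  exact Measure.toSignedMeasure_sub_apply hA

lemma abs_signed_apply_le (s : SignedMeasure Ω) {A : Set Ω} (hA : MeasurableSet A) :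
    |s A| ≤ (s.totalVariation A).toReal := by
  rw [signed_apply_eq s hA, SignedMeasure.totalVariation, Measure.add_apply,
    ENNReal.toReal_add (measure_ne_top _ _) (measure_ne_top _ _)]
  have h1 : (0:ℝ) ≤ (s.toJordanDecomposition.posPart A).toReal := ENNReal.toReal_nonneg
  have h2 : (0:ℝ) ≤ (s.toJordanDecomposition.negPart A).toReal := ENNReal.toReal_nonneg
  rw [abs_sub_le_iff]; constructor <;> linarith

lemma totalVariation_real_smul (s : SignedMeasure Ω) (c : ℝ) (hc : 0 ≤ c) :
    (c • s).totalVariation = c.toNNReal • s.totalVariation := by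
  unfold SignedMeasure.totalVariation
  rw [SignedMeasure.toJordanDecomposition_smul_real,
    JordanDecomposition.real_smul_nonneg _ _ hc,
    JordanDecomposition.smul_posPart, JordanDecomposition.smul_negPart, smul_add]

lemma dualApply_smul (m : VectorMeasure Ω X) (c : ℝ) (x : X →L[ℝ] ℝ) :
    dualApply m (c • x) = c • dualApply m x := by
  refine VectorMeasure.ext fun A hA => ?_
  rw [dualApply_apply]
  simp [dualApply_apply]

lemma dualApply_zero (m : VectorMeasure Ω X) : dualApply m (0 : X →L[ℝ] ℝ) = 0 := by
  refine VectorMeasure.ext fun A hA => ?_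
  rw [dualApply_apply]
  simp

/-- scaling: reduce an arbitrary functional to one in the unit ball -/
lemma exists_unit_scale (m : VectorMeasure Ω X) (x : X →L[ℝ] ℝ) (hx : x ≠ 0) :
    ∃ y : X →L[ℝ] ℝ, ‖y‖ ≤ 1 ∧
      (dualApply m x).totalVariation = ‖x‖.toNNReal • (dualApply m y).totalVariation := by
  refine ⟨‖x‖⁻¹ • x, ?_, ?_⟩
  · refine le_trans (ContinuousLinearMap.opNorm_smul_le _ _) ?_
    rw [norm_inv, norm_norm, inv_mul_cancel₀ (norm_ne_zero_iff.2 hx)]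
  · have : dualApply m x = ‖x‖ • dualApply m (‖x‖⁻¹ • x) := by
      rw [dualApply_smul, smul_smul, mul_inv_cancel₀ (norm_ne_zero_iff.2 hx), one_smul]
    rw [this, totalVariation_real_smul _ _ (norm_nonneg x)]

lemma semivar_null_tv (m : VectorMeasure Ω X) {N : Set Ω} (h : semivar m N = 0)
    (x : X →L[ℝ] ℝ) : (dualApply m x).totalVariation N = 0 := by
  have hball : ∀ y : {x : X →L[ℝ] ℝ // ‖x‖ ≤ 1}, (dualApply m y.1).totalVariation N = 0 := by
    rw [semivar, ENNReal.iSup_eq_zero] at h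
    exact h
  by_cases hx : x = 0
  · subst hx
    rw [dualApply_zero, SignedMeasure.totalVariation_zero]
    rfl
  · obtain ⟨y, hy, heq⟩ := exists_unit_scale m x hx
    rw [heq, Measure.smul_apply, hball ⟨y, hy⟩, smul_zero]

lemma integrable_tv_parts {s : SignedMeasure Ω} {g : Ω → ℝ}
    (hg : MeasureTheory.Integrable g s.totalVariation) :
    MeasureTheory.Integrable g s.toJordanDecomposition.posPart ∧
      MeasureTheory.Integrable g s.toJordanDecomposition.negPart := by
  rw [SignedMeasure.totalVariation, integrable_add_measure] at hg
  exact hg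

lemma sIntegral_sub (s : SignedMeasure Ω) {g h : Ω → ℝ}
    (hg : MeasureTheory.Integrable g s.totalVariation)
    (hh : MeasureTheory.Integrable h s.totalVariation) (A : Set Ω) :
    sIntegral s (fun ω => g ω - h ω) A = sIntegral s g A - sIntegral s h A := by
  obtain ⟨hgp, hgn⟩ := integrable_tv_parts hg
  obtain ⟨hhp, hhn⟩ := integrable_tv_parts hh
  unfold sIntegral
  rw [integral_sub hgp.integrableOn hhp.integrableOn,
    integral_sub hgn.integrableOn hhn.integrableOn]
  ring

lemma sIntegral_union (s : SignedMeasure Ω) {g : Ω → ℝ}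
    (hg : MeasureTheory.Integrable g s.totalVariation) {A B : Set Ω}
    (hB : MeasurableSet B) (hAB : Disjoint A B) :
    sIntegral s g (A ∪ B) = sIntegral s g A + sIntegral s g B := by
  obtain ⟨hgp, hgn⟩ := integrable_tv_parts hg
  unfold sIntegral
  rw [setIntegral_union hAB hB hgp.integrableOn hgp.integrableOn,
    setIntegral_union hAB hB hgn.integrableOn hgn.integrableOn]
  ring

lemma setIntegral_abs_tv_add (s : SignedMeasure Ω) {g : Ω → ℝ}
    (hg : MeasureTheory.Integrable g s.totalVariation) (A : Set Ω) :
    ∫ ω in A, |g ω| ∂s.totalVariation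
      = (∫ ω in A, |g ω| ∂s.toJordanDecomposition.posPart)
        + ∫ ω in A, |g ω| ∂s.toJordanDecomposition.negPart := by
  obtain ⟨hgp, hgn⟩ := integrable_tv_parts hg
  rw [SignedMeasure.totalVariation, Measure.restrict_add,
    integral_add_measure hgp.abs.integrableOn hgn.abs.integrableOn]

lemma abs_sIntegral_le (s : SignedMeasure Ω) {g : Ω → ℝ}
    (hg : MeasureTheory.Integrable g s.totalVariation) (A : Set Ω) :
    |sIntegral s g A| ≤ ∫ ω in A, |g ω| ∂s.totalVariation := by
  obtain ⟨hgp, hgn⟩ := integrable_tv_parts hg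
  rw [SignedMeasure.totalVariation, Measure.restrict_add,
    integral_add_measure hgp.abs.integrableOn hgn.abs.integrableOn]
  unfold sIntegral
  have h1 : |∫ ω in A, g ω ∂s.toJordanDecomposition.posPart|
      ≤ ∫ ω in A, |g ω| ∂s.toJordanDecomposition.posPart := by
    simpa using norm_integral_le_integral_norm (μ := s.toJordanDecomposition.posPart.restrict A) g
  have h2 : |∫ ω in A, g ω ∂s.toJordanDecomposition.negPart|
      ≤ ∫ ω in A, |g ω| ∂s.toJordanDecomposition.negPart := by
    simpa using norm_integral_le_integral_norm (μ := s.toJordanDecomposition.negPart.restrict A) g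
  calc |(∫ ω in A, g ω ∂s.toJordanDecomposition.posPart)
      - ∫ ω in A, g ω ∂s.toJordanDecomposition.negPart|
      ≤ |∫ ω in A, g ω ∂s.toJordanDecomposition.posPart|
        + |∫ ω in A, g ω ∂s.toJordanDecomposition.negPart| := abs_sub _ _
    _ ≤ _ := add_le_add h1 h2

lemma mIntegral_spec {m : VectorMeasure Ω X} {g : Ω → ℝ} (hg : MIntegrable m g)
    {A : Set Ω} (hA : MeasurableSet A) (x : X →L[ℝ] ℝ) :
    x (mIntegral m g A) = sIntegral (dualApply m x) g A := by
  rw [mIntegral, dif_pos (hg.2.2 A hA)]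
  exact (hg.2.2 A hA).choose_spec x

lemma MIntegrable.sub' {m : VectorMeasure Ω X} {g h : Ω → ℝ} (hg : MIntegrable m g)
    (hh : MIntegrable m h) : MIntegrable m (fun ω => g ω - h ω) := by
  refine ⟨hg.1.sub hh.1, fun x => (hg.2.1 x).sub (hh.2.1 x), fun A hA => ?_⟩
  obtain ⟨vg, hvg⟩ := hg.2.2 A hA
  obtain ⟨vh, hvh⟩ := hh.2.2 A hA
  refine ⟨vg - vh, fun x => ?_⟩
  rw [map_sub, hvg x, hvh x, sIntegral_sub _ (hg.2.1 x) (hh.2.1 x)]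

lemma MIntegrable.one {m : VectorMeasure Ω X} : MIntegrable m (fun _ => (1 : ℝ)) := by
  refine ⟨measurable_const, fun x => integrable_const 1, fun A hA => ?_⟩
  refine ⟨m A, fun x => ?_⟩
  rw [← dualApply_apply m x A, sIntegral, setIntegral_const, setIntegral_const,
    signed_apply_eq _ hA]
  simp [measureReal_def]


lemma foursets (s : SignedMeasure Ω) {g : Ω → ℝ} (hmeas : Measurable g)
    (hg : MeasureTheory.Integrable g s.totalVariation) {A : Set Ω} (hA : MeasurableSet A) :
    ∃ B₁ B₂ B₃ B₄ : Set Ω,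
      (MeasurableSet B₁ ∧ B₁ ⊆ A) ∧ (MeasurableSet B₂ ∧ B₂ ⊆ A) ∧
      (MeasurableSet B₃ ∧ B₃ ⊆ A) ∧ (MeasurableSet B₄ ∧ B₄ ⊆ A) ∧
      ∫ ω in A, |g ω| ∂s.totalVariation
        ≤ |sIntegral s g B₁| + |sIntegral s g B₂| + |sIntegral s g B₃|
          + |sIntegral s g B₄| := by
  obtain ⟨hgp, hgn⟩ := integrable_tv_parts hg
  obtain ⟨u, hu, hpu, hnu⟩ := s.toJordanDecomposition.mutuallySingular
  set pos := s.toJordanDecomposition.posPart with hposdef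
  set neg := s.toJordanDecomposition.negPart with hnegdef
  set Gp : Set Ω := {ω | 0 ≤ g ω} with hGp
  have hGpm : MeasurableSet Gp := measurableSet_le measurable_const hmeas
  set B₁ := A ∩ uᶜ ∩ Gp with hB₁
  set B₂ := A ∩ uᶜ ∩ Gpᶜ with hB₂
  set B₃ := A ∩ u ∩ Gp with hB₃
  set B₄ := A ∩ u ∩ Gpᶜ with hB₄
  have hB₁m : MeasurableSet B₁ := (hA.inter hu.compl).inter hGpm
  have hB₂m : MeasurableSet B₂ := (hA.inter hu.compl).inter hGpm.compl
  have hB₃m : MeasurableSet B₃ := (hA.inter hu).inter hGpm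
  have hB₄m : MeasurableSet B₄ := (hA.inter hu).inter hGpm.compl
  -- splitting a set integral along a measurable set
  have hsplit : ∀ (μ : Measure Ω), MeasureTheory.Integrable (fun ω => |g ω|) μ →
      ∀ (S T : Set Ω), MeasurableSet S → MeasurableSet T →
      ∫ ω in S, |g ω| ∂μ = (∫ ω in S ∩ T, |g ω| ∂μ) + ∫ ω in S ∩ Tᶜ, |g ω| ∂μ := by
    intro μ hint S T hS hT
    rw [← setIntegral_union (Set.disjoint_left.2 fun ω h1 h2 => h2.2 h1.2)
      (hS.inter hT.compl) hint.integrableOn hint.integrableOn, Set.inter_union_compl]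
  -- vanishing on null parts
  have hposu : pos (A ∩ u) = 0 := measure_mono_null Set.inter_subset_right hpu
  have hneguc : ∀ B : Set Ω, B ⊆ uᶜ → neg B = 0 :=
    fun B hB => measure_mono_null hB hnu
  have hposu' : ∀ B : Set Ω, B ⊆ u → pos B = 0 :=
    fun B hB => measure_mono_null hB hpu
  -- the four sIntegral identities
  have key1 : ∫ ω in B₁, |g ω| ∂pos = sIntegral s g B₁ := by
    have h1 : ∫ ω in B₁, g ω ∂neg = 0 :=
      setIntegral_of_measure_zero (hneguc B₁ (fun ω hω => hω.1.2))
    have h2 : ∫ ω in B₁, |g ω| ∂pos = ∫ ω in B₁, g ω ∂pos :=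
      setIntegral_congr_fun hB₁m (fun ω hω => abs_of_nonneg hω.2)
    rw [h2, sIntegral, ← hposdef, ← hnegdef, h1]; ring
  have key2 : ∫ ω in B₂, |g ω| ∂pos = -sIntegral s g B₂ := by
    have h1 : ∫ ω in B₂, g ω ∂neg = 0 :=
      setIntegral_of_measure_zero (hneguc B₂ (fun ω hω => hω.1.2))
    have h2 : ∫ ω in B₂, |g ω| ∂pos = ∫ ω in B₂, (-g ω) ∂pos :=
      setIntegral_congr_fun hB₂m (fun ω hω => abs_of_neg (not_le.1 hω.2))
    rw [h2, integral_neg, sIntegral, ← hposdef, ← hnegdef, h1]; ring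
  have key3 : ∫ ω in B₃, |g ω| ∂neg = -sIntegral s g B₃ := by
    have h1 : ∫ ω in B₃, g ω ∂pos = 0 :=
      setIntegral_of_measure_zero (hposu' B₃ (fun ω hω => hω.1.2))
    have h2 : ∫ ω in B₃, |g ω| ∂neg = ∫ ω in B₃, g ω ∂neg :=
      setIntegral_congr_fun hB₃m (fun ω hω => abs_of_nonneg hω.2)
    rw [h2, sIntegral, ← hposdef, ← hnegdef, h1]; ring
  have key4 : ∫ ω in B₄, |g ω| ∂neg = sIntegral s g B₄ := by
    have h1 : ∫ ω in B₄, g ω ∂pos = 0 :=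
      setIntegral_of_measure_zero (hposu' B₄ (fun ω hω => hω.1.2))
    have h2 : ∫ ω in B₄, |g ω| ∂neg = ∫ ω in B₄, (-g ω) ∂neg :=
      setIntegral_congr_fun hB₄m (fun ω hω => abs_of_neg (not_le.1 hω.2))
    rw [h2, integral_neg, sIntegral, ← hposdef, ← hnegdef, h1]; ring
  -- decompose the total integral
  have dec : ∫ ω in A, |g ω| ∂s.totalVariation
      = ((∫ ω in B₁, |g ω| ∂pos) + ∫ ω in B₂, |g ω| ∂pos)
        + ((∫ ω in B₃, |g ω| ∂neg) + ∫ ω in B₄, |g ω| ∂neg) := by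
    rw [setIntegral_abs_tv_add s hg A, ← hposdef, ← hnegdef]
    have hp : ∫ ω in A, |g ω| ∂pos = (∫ ω in B₁, |g ω| ∂pos) + ∫ ω in B₂, |g ω| ∂pos := by
      rw [hsplit pos hgp.abs A u hA hu]
      have h0 : ∫ ω in A ∩ u, |g ω| ∂pos = 0 := setIntegral_of_measure_zero hposu
      rw [h0, zero_add, hsplit pos hgp.abs (A ∩ uᶜ) Gp (hA.inter hu.compl) hGpm]
    have hn : ∫ ω in A, |g ω| ∂neg = (∫ ω in B₃, |g ω| ∂neg) + ∫ ω in B₄, |g ω| ∂neg := by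
      rw [hsplit neg hgn.abs A uᶜ hA hu.compl]
      have h0 : ∫ ω in A ∩ uᶜ, |g ω| ∂neg = 0 :=
        setIntegral_of_measure_zero (hneguc _ Set.inter_subset_right)
      rw [h0, zero_add, hsplit neg hgn.abs (A ∩ (uᶜ)ᶜ) Gp (hA.inter hu.compl.compl) hGpm, compl_compl]
    rw [hp, hn]
  refine ⟨B₁, B₂, B₃, B₄, ⟨hB₁m, fun ω hω => hω.1.1⟩, ⟨hB₂m, fun ω hω => hω.1.1⟩,
    ⟨hB₃m, fun ω hω => hω.1.1⟩, ⟨hB₄m, fun ω hω => hω.1.1⟩, ?_⟩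
  rw [dec, key1, key2, key3, key4]
  have := le_abs_self (sIntegral s g B₁)
  have := neg_le_abs (sIntegral s g B₂)
  have := neg_le_abs (sIntegral s g B₃)
  have := le_abs_self (sIntegral s g B₄)
  linarith

lemma exists_ball_bound (m : VectorMeasure Ω X) {g : Ω → ℝ} (hg : MIntegrable m g) :
    ∃ C : ℝ, 0 ≤ C ∧ ∀ x : X →L[ℝ] ℝ, ‖x‖ ≤ 1 →
      ∫ ω, |g ω| ∂(dualApply m x).totalVariation ≤ C := by
  classical
  set T : {A : Set Ω // MeasurableSet A} → _ :=
    fun A => NormedSpace.inclusionInDoubleDual ℝ X (mIntegral m g A.1) with hT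
  have hTval : ∀ (A : {A : Set Ω // MeasurableSet A}) (x : X →L[ℝ] ℝ),
      T A x = sIntegral (dualApply m x) g A.1 := by
    intro A x
    rw [hT]
    exact mIntegral_spec hg A.2 x
  have hpt : ∀ x : X →L[ℝ] ℝ, ∃ C, ∀ A : {A : Set Ω // MeasurableSet A}, ‖T A x‖ ≤ C := by
    intro x
    refine ⟨∫ ω, |g ω| ∂(dualApply m x).totalVariation, fun A => ?_⟩
    rw [hTval A x, Real.norm_eq_abs]
    refine le_trans (abs_sIntegral_le _ (hg.2.1 x) _) ?_
    exact setIntegral_le_integral (hg.2.1 x).abs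
      (Filter.Eventually.of_forall fun ω => abs_nonneg _)
  obtain ⟨C', hC'⟩ := banach_steinhaus hpt
  refine ⟨4 * max C' 0, by positivity, fun x hx => ?_⟩
  obtain ⟨B₁, B₂, B₃, B₄, h₁, h₂, h₃, h₄, hle⟩ :=
    foursets (dualApply m x) hg.1 (hg.2.1 x) MeasurableSet.univ
  have conv : ∀ (B : Set Ω), MeasurableSet B →
      |sIntegral (dualApply m x) g B| ≤ max C' 0 := by
    intro B hB
    rw [← hTval ⟨B, hB⟩ x, ← Real.norm_eq_abs]
    calc ‖T ⟨B, hB⟩ x‖ ≤ ‖T ⟨B, hB⟩‖ * ‖x‖ := ContinuousLinearMap.le_opNorm _ _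
      _ ≤ max C' 0 * 1 :=
        mul_le_mul (le_trans (hC' _) (le_max_left _ _)) hx (norm_nonneg _) (le_max_right _ _)
      _ = max C' 0 := mul_one _
  have : ∫ ω, |g ω| ∂(dualApply m x).totalVariation
      = ∫ ω in Set.univ, |g ω| ∂(dualApply m x).totalVariation := by
    rw [setIntegral_univ]
  rw [this]
  refine le_trans hle ?_
  have c1 := conv B₁ h₁.1
  have c2 := conv B₂ h₂.1
  have c3 := conv B₃ h₃.1
  have c4 := conv B₄ h₄.1
  linarith

lemma exists_tv_bound (m : VectorMeasure Ω X) :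
    ∃ C : ℝ, 0 ≤ C ∧ ∀ x : X →L[ℝ] ℝ, ‖x‖ ≤ 1 →
      (dualApply m x).totalVariation Set.univ ≤ ENNReal.ofReal C := by
  obtain ⟨C, hC0, hC⟩ := exists_ball_bound m (MIntegrable.one (m := m))
  refine ⟨C, hC0, fun x hx => ?_⟩
  have h1 := hC x hx
  have h2 : ∫ ω, |(1:ℝ)| ∂(dualApply m x).totalVariation
      = ((dualApply m x).totalVariation Set.univ).toReal := by
    simp [measureReal_def]
  rw [h2] at h1
  rw [← ENNReal.ofReal_toReal (measure_ne_top (dualApply m x).totalVariation Set.univ)]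
  exact ENNReal.ofReal_le_ofReal h1

lemma integral_abs_le_of_lintegral {μ : Measure Ω} [IsFiniteMeasure μ] {g : Ω → ℝ}
    (hg : MeasureTheory.Integrable g μ) {A : Set Ω} {c : ℝ} (hc : 0 ≤ c)
    (h : ∫⁻ ω in A, ‖g ω‖₊ ∂μ ≤ ENNReal.ofReal c) :
    ∫ ω in A, |g ω| ∂μ ≤ c := by
  have h1 : ENNReal.ofReal (∫ ω in A, ‖g ω‖ ∂μ) = ∫⁻ ω in A, ‖g ω‖₊ ∂μ :=
    ofReal_integral_norm_eq_lintegral_enorm hg.integrableOn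
  have h2 : ∫ ω in A, |g ω| ∂μ = ∫ ω in A, ‖g ω‖ ∂μ := by
    simp [Real.norm_eq_abs]
  rw [h2, ← ENNReal.toReal_ofReal (integral_nonneg (fun ω => norm_nonneg (g ω)) :
    (0:ℝ) ≤ ∫ ω in A, ‖g ω‖ ∂μ), h1]
  calc (∫⁻ ω in A, ‖g ω‖₊ ∂μ).toReal ≤ (ENNReal.ofReal c).toReal :=
        ENNReal.toReal_mono ENNReal.ofReal_ne_top h
    _ = c := ENNReal.toReal_ofReal hc

/-- THE KEY CAUCHY PROPERTY -/
lemma cauchy_key (m : VectorMeasure Ω X) (f : Ω → ℝ)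
    (F : ℕ → Ω → ℝ) (hF : ∀ n, MIntegrable m (F n))
    (hae : MAE m (fun ω => Filter.Tendsto (fun n => F n ω) Filter.atTop (nhds (f ω))))
    (hconv : ∀ A : Set Ω, MeasurableSet A →
      ∃ L : X, Filter.Tendsto (fun n => mIntegral m (F n) A) Filter.atTop (nhds L))
    {ε : ℝ} (hε : 0 < ε) :
    ∃ N, ∀ n k, N ≤ n → N ≤ k → ∀ x : X →L[ℝ] ℝ, ‖x‖ ≤ 1 →
      ∫ ω, |F n ω - F k ω| ∂(dualApply m x).totalVariation ≤ ε := by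
  classical
  by_contra hcon
  push_neg at hcon
  choose nj kj hn hk xj hxj hgt using hcon
  set G : ℕ → Ω → ℝ := fun j ω => F (nj j) ω - F (kj j) ω with hG
  set μj : ℕ → Measure Ω := fun j => (dualApply m (xj j)).totalVariation with hμj
  have hGmeas : ∀ j, Measurable (G j) := fun j => ((hF (nj j)).1.sub ((hF (kj j)).1))
  have hGint : ∀ j (x : X →L[ℝ] ℝ),
      MeasureTheory.Integrable (G j) (dualApply m x).totalVariation :=
    fun j x => ((hF (nj j)).2.1 x).sub ((hF (kj j)).2.1 x)
  obtain ⟨C, hC0, hC⟩ := exists_tv_bound m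
  have hμjtop : ∀ j, μj j Set.univ ≤ ENNReal.ofReal C := fun j => hC (xj j) (hxj j)
  set lam : Measure Ω := Measure.sum (fun j => (2:ℝ≥0∞)⁻¹ ^ j • μj j) with hlam
  haveI hlamfin : IsFiniteMeasure lam := by
    constructor
    rw [hlam, Measure.sum_apply _ MeasurableSet.univ]
    have hterm : ∀ j : ℕ, ((2:ℝ≥0∞)⁻¹ ^ j • μj j) Set.univ
        ≤ (2:ℝ≥0∞)⁻¹ ^ j * ENNReal.ofReal C := by
      intro j
      rw [Measure.smul_apply, smul_eq_mul]
      exact mul_le_mul_right (hμjtop j) _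
    refine lt_of_le_of_lt (ENNReal.tsum_le_tsum hterm) ?_
    rw [ENNReal.tsum_mul_right, ENNReal.tsum_geometric, ENNReal.one_sub_inv_two]
    exact ENNReal.mul_lt_top (by simp) ENNReal.ofReal_lt_top
  have hlam_le : ∀ j {A : Set Ω}, MeasurableSet A → μj j A ≤ (2:ℝ≥0∞) ^ j * lam A := by
    intro j A hA
    have base : (2:ℝ≥0∞)⁻¹ ^ j * μj j A ≤ lam A := by
      rw [hlam, Measure.sum_apply _ hA]
      exact le_trans (le_of_eq (by rw [Measure.smul_apply, smul_eq_mul])) (ENNReal.le_tsum j)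
    calc μj j A = (2:ℝ≥0∞) ^ j * ((2:ℝ≥0∞)⁻¹ ^ j * μj j A) := by
          rw [← mul_assoc, ← mul_pow, ENNReal.mul_inv_cancel (by norm_num) (by norm_num),
            one_pow, one_mul]
      _ ≤ (2:ℝ≥0∞) ^ j * lam A := mul_le_mul_right base _
  -- the finitely additive set functions
  set ρ : ℕ → Set Ω → ℝ := fun j A => sIntegral (dualApply m (xj j)) (G j) A with hρ
  have hadd : ∀ j (A B : Set Ω), MeasurableSet A → MeasurableSet B → Disjoint A B →
      ρ j (A ∪ B) = ρ j A + ρ j B :=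
    fun j A B hA hB hAB => sIntegral_union _ (hGint j (xj j)) hB hAB
  have hac : ∀ j, ∀ ε' : ℝ, 0 < ε' → ∃ δ : ℝ, 0 < δ ∧ ∀ A, MeasurableSet A →
      lam A < ENNReal.ofReal δ → |ρ j A| ≤ ε' := by
    intro j ε' hε'
    have hmem : MemLp (G j) 1 (μj j) := memLp_one_iff_integrable.2 (hGint j (xj j))
    obtain ⟨δ0, hδ0, hδ⟩ := hmem.eLpNorm_indicator_le le_rfl ENNReal.one_ne_top hε'
    set D : ℝ≥0∞ := (2:ℝ≥0∞)⁻¹ ^ j * ENNReal.ofReal δ0 with hD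
    have hDne0 : D ≠ 0 := by
      rw [hD]
      have h1 : ((2:ℝ≥0∞)⁻¹ ^ j) ≠ 0 := pow_ne_zero _ (by norm_num)
      have h2 : ENNReal.ofReal δ0 ≠ 0 := by
        simp [ENNReal.ofReal_eq_zero, not_le, hδ0]
      exact (ENNReal.mul_pos h1 h2).ne'
    have hDnetop : D ≠ ⊤ := by
      rw [hD]
      exact ENNReal.mul_ne_top (by simp) ENNReal.ofReal_ne_top
    refine ⟨D.toReal, ENNReal.toReal_pos hDne0 hDnetop, fun A hA hAlam => ?_⟩
    rw [ENNReal.ofReal_toReal hDnetop] at hAlam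
    have hμA : μj j A ≤ ENNReal.ofReal δ0 := by
      have h1 : μj j A ≤ (2:ℝ≥0∞) ^ j * lam A := hlam_le j hA
      have hpow0 : ((2:ℝ≥0∞) ^ j) ≠ 0 := pow_ne_zero _ (by norm_num)
      have hpowt : ((2:ℝ≥0∞) ^ j) ≠ ⊤ := by simp
      have h2 : (2:ℝ≥0∞) ^ j * lam A < (2:ℝ≥0∞) ^ j * D :=
        (ENNReal.mul_lt_mul_iff_right hpow0 hpowt).2 hAlam
      have h3 : (2:ℝ≥0∞) ^ j * D = ENNReal.ofReal δ0 := by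
        rw [hD, ← mul_assoc, ← mul_pow, ENNReal.mul_inv_cancel (by norm_num) (by norm_num),
          one_pow, one_mul]
      exact le_of_lt (lt_of_le_of_lt h1 (h3 ▸ h2))
    have hsnorm := hδ A hA hμA
    rw [eLpNorm_one_eq_lintegral_enorm] at hsnorm
    have hlin : ∫⁻ ω in A, ‖G j ω‖₊ ∂(μj j) ≤ ENNReal.ofReal ε' := by
      have heq : ∫⁻ ω in A, (‖G j ω‖₊ : ℝ≥0∞) ∂(μj j)
          = ∫⁻ ω, (‖A.indicator (G j) ω‖₊ : ℝ≥0∞) ∂(μj j) := by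
        rw [← lintegral_indicator hA (fun ω => (‖G j ω‖₊ : ℝ≥0∞))]
        refine lintegral_congr fun ω => ?_
        by_cases hω : ω ∈ A <;>
          simp [Set.indicator_of_mem, Set.indicator_of_notMem, hω]
      rw [heq]
      exact hsnorm
    refine le_trans (abs_sIntegral_le _ (hGint j (xj j)) A) ?_
    exact integral_abs_le_of_lintegral (hGint j (xj j)) (le_of_lt hε') hlin
  have hcauchy : ∀ A, MeasurableSet A → CauchySeq (fun j => ρ j A) := by
    intro A hA
    obtain ⟨L, hL⟩ := hconv A hA
    have hcs : CauchySeq (fun n => mIntegral m (F n) A) := hL.cauchySeq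
    have hval : ∀ j, ρ j A = (xj j) (mIntegral m (F (nj j)) A - mIntegral m (F (kj j)) A) := by
      intro j
      have hs := sIntegral_sub (dualApply m (xj j))
        ((hF (nj j)).2.1 (xj j)) ((hF (kj j)).2.1 (xj j)) A
      rw [map_sub, mIntegral_spec (hF (nj j)) hA, mIntegral_spec (hF (kj j)) hA]
      exact hs
    have htend : Filter.Tendsto (fun j => ρ j A) Filter.atTop (nhds 0) := by
      rw [Metric.tendsto_atTop]
      intro η hη
      rw [Metric.cauchySeq_iff] at hcs
      obtain ⟨N, hN⟩ := hcs η hη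
      refine ⟨N, fun j hj => ?_⟩
      rw [Real.dist_eq, sub_zero, hval j]
      have h1 : |(xj j) (mIntegral m (F (nj j)) A - mIntegral m (F (kj j)) A)|
          ≤ ‖mIntegral m (F (nj j)) A - mIntegral m (F (kj j)) A‖ := by
        rw [← Real.norm_eq_abs]
        calc ‖(xj j) _‖ ≤ ‖xj j‖ * ‖_‖ := ContinuousLinearMap.le_opNorm _ _
          _ ≤ 1 * _ := mul_le_mul_of_nonneg_right (hxj j) (norm_nonneg _)
          _ = _ := one_mul _
      refine lt_of_le_of_lt h1 ?_
      have := hN (nj j) (le_trans hj (hn j)) (kj j) (le_trans hj (hk j))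
      rwa [dist_eq_norm] at this
    exact htend.cauchySeq
  -- Vitali-Hahn-Saks
  obtain ⟨δ, hδpos, hδ⟩ := VHSAux.vhs lam ρ hadd hac hcauchy
    (show (0:ℝ) < ε / 16 by positivity)
  -- variation version
  have hvar : ∀ A : Set Ω, MeasurableSet A → lam A < ENNReal.ofReal δ →
      ∀ j, ∫ ω in A, |G j ω| ∂(μj j) ≤ ε / 4 := by
    intro A hA hAlam j
    obtain ⟨B₁, B₂, B₃, B₄, h₁, h₂, h₃, h₄, hle⟩ :=
      foursets (dualApply m (xj j)) (hGmeas j) (hGint j (xj j)) hA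
    have hb : ∀ (B : Set Ω), MeasurableSet B → B ⊆ A → |ρ j B| ≤ ε / 16 := by
      intro B hB hBA
      exact hδ B hB (lt_of_le_of_lt (measure_mono hBA) hAlam) j
    have c1 := hb B₁ h₁.1 h₁.2
    have c2 := hb B₂ h₂.1 h₂.2
    have c3 := hb B₃ h₃.1 h₃.2
    have c4 := hb B₄ h₄.1 h₄.2
    rw [hμj]
    refine le_trans hle ?_
    rw [hρ] at c1 c2 c3 c4
    linarith
  -- Egorov
  obtain ⟨Nset, hNmeas, hNsv, hNconv⟩ := hae
  have hlamN : lam Nset = 0 := by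
    rw [hlam, Measure.sum_apply _ hNmeas]
    have : ∀ j, ((2:ℝ≥0∞)⁻¹ ^ j • μj j) Nset = 0 := by
      intro j
      rw [Measure.smul_apply, hμj, semivar_null_tv m hNsv, smul_zero]
    simp [this]
  have hae' : ∀ᵐ ω ∂lam, ω ∈ (Set.univ : Set Ω) →
      Filter.Tendsto (fun j => G j ω) Filter.atTop (nhds ((fun _ => (0:ℝ)) ω)) := by
    rw [MeasureTheory.ae_iff]
    refine measure_mono_null (fun ω hω => ?_) hlamN
    by_contra hωN
    refine hω ?_
    intro _
    have hgen := hNconv ω hωN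
    have h1 : Filter.Tendsto (fun j => F (nj j) ω) Filter.atTop (nhds (f ω)) :=
      hgen.comp (Filter.tendsto_atTop_mono hn Filter.tendsto_id)
    have h2 : Filter.Tendsto (fun j => F (kj j) ω) Filter.atTop (nhds (f ω)) :=
      hgen.comp (Filter.tendsto_atTop_mono hk Filter.tendsto_id)
    have := h1.sub h2
    rwa [sub_self] at this
  set η : ℝ := ε / 4 / (C + 1) with hη
  have hηpos : 0 < η := by positivity
  obtain ⟨t, htsub, htmeas, htlam, htu⟩ :=
    MeasureTheory.tendstoUniformlyOn_of_ae_tendsto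
      (fun j => (hGmeas j).stronglyMeasurable)
      stronglyMeasurable_const MeasurableSet.univ (measure_ne_top lam _) hae'
      (show (0:ℝ) < δ / 2 by positivity)
  have htlam' : lam t < ENNReal.ofReal δ :=
    lt_of_le_of_lt htlam (ENNReal.ofReal_lt_ofReal_iff hδpos |>.2 (by linarith))
  obtain ⟨J, hJ⟩ := Filter.eventually_atTop.1
    (Metric.tendstoUniformlyOn_iff.1 htu η hηpos)
  -- the contradiction at index J
  have hsplit : ∫ ω, |G J ω| ∂(μj J)
      = (∫ ω in t, |G J ω| ∂(μj J)) + ∫ ω in tᶜ, |G J ω| ∂(μj J) :=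
    (integral_add_compl htmeas (hGint J (xj J)).abs).symm
  have hb1 : ∫ ω in t, |G J ω| ∂(μj J) ≤ ε / 4 := hvar t htmeas htlam' J
  have hb2 : ∫ ω in tᶜ, |G J ω| ∂(μj J) ≤ ε / 4 := by
    have hbd : ∀ ω ∈ tᶜ, |G J ω| ≤ η := by
      intro ω hω
      have h := hJ J le_rfl ω ⟨trivial, hω⟩
      rw [Real.dist_eq] at h
      have heq : |G J ω| = |0 - G J ω| := by rw [zero_sub, abs_neg]
      rw [heq]
      exact le_of_lt h
    have hmono : ∫ ω in tᶜ, |G J ω| ∂(μj J) ≤ ∫ _ω in tᶜ, η ∂(μj J) :=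
      setIntegral_mono_on (hGint J (xj J)).abs.integrableOn
        (integrable_const η).integrableOn htmeas.compl hbd
    refine le_trans hmono ?_
    rw [setIntegral_const, smul_eq_mul]
    have hm : (μj J tᶜ).toReal ≤ C + 1 := by
      have h1 : μj J tᶜ ≤ ENNReal.ofReal C :=
        le_trans (measure_mono (Set.subset_univ _)) (hμjtop J)
      have h2 := ENNReal.toReal_mono ENNReal.ofReal_ne_top h1
      rw [ENNReal.toReal_ofReal hC0] at h2
      linarith
    have hC1 : C + 1 ≠ 0 := by positivity
    have hfinal : (C + 1) * η = ε / 4 := by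
      rw [hη]
      field_simp
    calc (μj J tᶜ).toReal * η ≤ (C + 1) * η :=
          mul_le_mul_of_nonneg_right hm (le_of_lt hηpos)
      _ = ε / 4 := hfinal
  have hgtJ : ε < ∫ ω, |G J ω| ∂(μj J) := hgt J
  rw [hsplit] at hgtJ
  linarith

lemma scale_transfer (m : VectorMeasure Ω X) (x : X →L[ℝ] ℝ) (hx : x ≠ 0) :
    ∃ y : X →L[ℝ] ℝ, ‖y‖ ≤ 1 ∧
      (∀ g : Ω → ℝ, MeasureTheory.Integrable g (dualApply m y).totalVariation →
        MeasureTheory.Integrable g (dualApply m x).totalVariation) ∧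
      (∀ g : Ω → ℝ, ∫ ω, g ω ∂(dualApply m x).totalVariation
        = ‖x‖ * ∫ ω, g ω ∂(dualApply m y).totalVariation) := by
  obtain ⟨y, hy, heq⟩ := exists_unit_scale m x hx
  have hsm : (dualApply m x).totalVariation
      = ((‖x‖.toNNReal : ℝ≥0∞)) • (dualApply m y).totalVariation := by
    rw [heq]
    rfl
  refine ⟨y, hy, ?_, ?_⟩
  · intro g hg
    rw [hsm]
    exact hg.smul_measure ENNReal.coe_ne_top
  · intro g
    rw [hsm, integral_smul_measure]
    simp [Real.coe_toNNReal _ (norm_nonneg x)]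

lemma fatou_bound (m : VectorMeasure Ω X) {f : Ω → ℝ} (hf : Measurable f)
    {F : ℕ → Ω → ℝ} (hF : ∀ n, MIntegrable m (F n)) (x : X →L[ℝ] ℝ)
    (hae : ∀ᵐ ω ∂(dualApply m x).totalVariation,
      Filter.Tendsto (fun k => F k ω) Filter.atTop (nhds (f ω)))
    {n N : ℕ} {c : ℝ} (hc : 0 ≤ c)
    (hb : ∀ k, N ≤ k → ∫ ω, |F n ω - F k ω| ∂(dualApply m x).totalVariation ≤ c) :
    MeasureTheory.Integrable (fun ω => F n ω - f ω) (dualApply m x).totalVariation ∧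
      ∫ ω, |F n ω - f ω| ∂(dualApply m x).totalVariation ≤ c := by
  have hmeasn : ∀ k, Measurable fun ω => F n ω - F k ω := fun k => (hF n).1.sub (hF k).1
  have hintk : ∀ k, MeasureTheory.Integrable (fun ω => F n ω - F k ω)
      (dualApply m x).totalVariation := fun k => ((hF n).2.1 x).sub ((hF k).2.1 x)
  have hptwise : ∀ᵐ ω ∂(dualApply m x).totalVariation, (‖F n ω - f ω‖₊ : ℝ≥0∞)
      = Filter.liminf (fun k => (‖F n ω - F k ω‖₊ : ℝ≥0∞)) Filter.atTop := by
    filter_upwards [hae] with ω hω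
    have h1 : Filter.Tendsto (fun k => (‖F n ω - F k ω‖₊ : ℝ≥0∞)) Filter.atTop
        (nhds (‖F n ω - f ω‖₊ : ℝ≥0∞)) :=
      ENNReal.tendsto_coe.2 (Filter.Tendsto.nnnorm (tendsto_const_nhds.sub hω))
    exact h1.liminf_eq.symm
  have hev : ∀ᶠ k in Filter.atTop,
      ∫⁻ ω, (‖F n ω - F k ω‖₊ : ℝ≥0∞) ∂(dualApply m x).totalVariation
        ≤ ENNReal.ofReal c := by
    refine Filter.eventually_atTop.2 ⟨N, fun k hk => ?_⟩
    refine le_trans (le_of_eq (ofReal_integral_norm_eq_lintegral_enorm (hintk k)).symm) ?_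
    refine ENNReal.ofReal_le_ofReal ?_
    have := hb k hk
    simpa [Real.norm_eq_abs] using this
  have hlb : ∫⁻ ω, (‖F n ω - f ω‖₊ : ℝ≥0∞) ∂(dualApply m x).totalVariation
      ≤ ENNReal.ofReal c := by
    rw [lintegral_congr_ae hptwise]
    refine le_trans (lintegral_liminf_le
      (fun k => ((hmeasn k).nnnorm.coe_nnreal_ennreal))) ?_
    exact le_trans Filter.liminf_le_limsup (Filter.limsup_le_of_le (by isBoundedDefault) hev)
  have hint : MeasureTheory.Integrable (fun ω => F n ω - f ω)
      (dualApply m x).totalVariation := by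
    refine ⟨((hF n).1.sub hf).aestronglyMeasurable, ?_⟩
    exact lt_of_le_of_lt hlb ENNReal.ofReal_lt_top
  refine ⟨hint, ?_⟩
  have h2 := integral_abs_le_of_lintegral (A := Set.univ) hint hc
    (by rw [Measure.restrict_univ]; exact hlb)
  rwa [setIntegral_univ] at h2

theorem statement0'
    {Ω : Type*} [MeasurableSpace Ω]
    {X : Type*} [NormedAddCommGroup X] [NormedSpace ℝ X] [CompleteSpace X]
    (m : VectorMeasure Ω X)
    (f : Ω → ℝ) (hf : Measurable f)
    (F : ℕ → Ω → ℝ) (hF : ∀ n, MIntegrable m (F n))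
    (hae : MAE m (fun ω => Tendsto (fun n => F n ω) atTop (nhds (f ω))))
    (hconv : ∀ A : Set Ω, MeasurableSet A →
      ∃ L : X, Tendsto (fun n => mIntegral m (F n) A) atTop (nhds L)) :
    MIntegrable m f ∧
      Tendsto (fun n => mNorm m (fun ω => F n ω - f ω)) atTop (nhds 0) := by
  classical
  obtain ⟨Nset, hNmeas, hNsv, hNconv⟩ := hae
  -- a.e. convergence w.r.t. every variation measure
  have haex : ∀ x : X →L[ℝ] ℝ, ∀ᵐ ω ∂(dualApply m x).totalVariation,
      Tendsto (fun k => F k ω) atTop (nhds (f ω)) := by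
    intro x
    rw [MeasureTheory.ae_iff]
    refine measure_mono_null (fun ω hω => ?_) (semivar_null_tv m hNsv x)
    by_contra hωN
    exact hω (hNconv ω hωN)
  -- the key uniform estimate
  have key : ∀ ε : ℝ, 0 < ε → ∃ N, ∀ n, N ≤ n → ∀ x : X →L[ℝ] ℝ, ‖x‖ ≤ 1 →
      MeasureTheory.Integrable (fun ω => F n ω - f ω) (dualApply m x).totalVariation ∧
        ∫ ω, |F n ω - f ω| ∂(dualApply m x).totalVariation ≤ ε := by
    intro ε hε
    obtain ⟨N, hN⟩ := cauchy_key m f F hF ⟨Nset, hNmeas, hNsv, hNconv⟩ hconv hε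
    exact ⟨N, fun n hn x hx =>
      fatou_bound m hf hF x (haex x) (le_of_lt hε) (fun k hk => hN n k hn hk x hx)⟩
  obtain ⟨N₁, hN₁⟩ := key 1 one_pos
  -- integrability of f w.r.t. every variation measure
  have hint_all : ∀ x : X →L[ℝ] ℝ,
      MeasureTheory.Integrable f (dualApply m x).totalVariation := by
    intro x
    by_cases hx : x = 0
    · subst hx
      rw [dualApply_zero, SignedMeasure.totalVariation_zero]
      exact integrable_zero_measure
    · obtain ⟨y, hy, htrans, _⟩ := scale_transfer m x hx
      have h1 : MeasureTheory.Integrable (fun ω => F N₁ ω - f ω)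
          (dualApply m x).totalVariation := htrans _ (hN₁ N₁ le_rfl y hy).1
      have h2 : MeasureTheory.Integrable (fun ω => F N₁ ω - (F N₁ ω - f ω))
          (dualApply m x).totalVariation := ((hF N₁).2.1 x).sub h1
      simpa using h2
  have hint_sub : ∀ (n : ℕ) (x : X →L[ℝ] ℝ),
      MeasureTheory.Integrable (fun ω => F n ω - f ω) (dualApply m x).totalVariation :=
    fun n x => ((hF n).2.1 x).sub (hint_all x)
  -- convergence of scalar integrals on every measurable set
  have hsint : ∀ (A : Set Ω), MeasurableSet A → ∀ x : X →L[ℝ] ℝ,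
      Tendsto (fun n => sIntegral (dualApply m x) (F n) A) atTop
        (nhds (sIntegral (dualApply m x) f A)) := by
    intro A hA x
    by_cases hx : x = 0
    · subst hx
      have hz : ∀ g : Ω → ℝ, sIntegral (dualApply m (0 : X →L[ℝ] ℝ)) g A = 0 := by
        intro g
        rw [sIntegral, dualApply_zero, SignedMeasure.toJordanDecomposition_zero]
        simp
      simp only [hz]
      exact tendsto_const_nhds
    · obtain ⟨y, hy, htrans, hmul⟩ := scale_transfer m x hx
      rw [Metric.tendsto_atTop]
      intro ε hε
      have hε' : 0 < ε / (2 * (‖x‖ + 1)) := by positivity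
      obtain ⟨N, hN⟩ := key _ hε'
      refine ⟨N, fun n hn => ?_⟩
      rw [Real.dist_eq]
      have hdiff : sIntegral (dualApply m x) (F n) A - sIntegral (dualApply m x) f A
          = sIntegral (dualApply m x) (fun ω => F n ω - f ω) A :=
        (sIntegral_sub _ ((hF n).2.1 x) (hint_all x) A).symm
      rw [hdiff]
      have hb1 : |sIntegral (dualApply m x) (fun ω => F n ω - f ω) A|
          ≤ ∫ ω in A, |F n ω - f ω| ∂(dualApply m x).totalVariation :=
        abs_sIntegral_le _ (hint_sub n x) A
      have hb2 : ∫ ω in A, |F n ω - f ω| ∂(dualApply m x).totalVariation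
          ≤ ∫ ω, |F n ω - f ω| ∂(dualApply m x).totalVariation :=
        setIntegral_le_integral (hint_sub n x).abs
          (Filter.Eventually.of_forall fun ω => abs_nonneg _)
      have hb3 : ∫ ω, |F n ω - f ω| ∂(dualApply m x).totalVariation
          = ‖x‖ * ∫ ω, |F n ω - f ω| ∂(dualApply m y).totalVariation :=
        hmul _
      have hb4 := (hN n hn y hy).2
      have hxpos : (0:ℝ) ≤ ‖x‖ := norm_nonneg x
      have hb5 : ‖x‖ * ∫ ω, |F n ω - f ω| ∂(dualApply m y).totalVariation
          ≤ ‖x‖ * (ε / (2 * (‖x‖ + 1))) := mul_le_mul_of_nonneg_left hb4 hxpos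
      have hb6 : ‖x‖ * (ε / (2 * (‖x‖ + 1))) < ε := by
        rw [div_eq_mul_inv] 
        have h1 : ‖x‖ * (ε * (2 * (‖x‖ + 1))⁻¹) = ε * (‖x‖ / (2 * (‖x‖ + 1))) := by
          ring
        rw [h1]
        have h2 : ‖x‖ / (2 * (‖x‖ + 1)) < 1 := by
          rw [div_lt_one (by positivity)]
          linarith
        calc ε * (‖x‖ / (2 * (‖x‖ + 1))) < ε * 1 := by
              exact mul_lt_mul_of_pos_left h2 hε
          _ = ε := mul_one ε
      calc |sIntegral (dualApply m x) (fun ω => F n ω - f ω) A|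
          ≤ ∫ ω, |F n ω - f ω| ∂(dualApply m x).totalVariation := le_trans hb1 hb2
        _ = ‖x‖ * ∫ ω, |F n ω - f ω| ∂(dualApply m y).totalVariation := hb3
        _ < ε := lt_of_le_of_lt hb5 hb6
  haveI : Nonempty {x : X →L[ℝ] ℝ // ‖x‖ ≤ 1} := ⟨⟨0, by simp⟩⟩
  constructor
  · refine ⟨hf, hint_all, fun A hA => ?_⟩
    obtain ⟨L, hL⟩ := hconv A hA
    refine ⟨L, fun x => ?_⟩
    have h1 : Tendsto (fun n => x (mIntegral m (F n) A)) atTop (nhds (x L)) :=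
      (x.continuous.tendsto L).comp hL
    have h2 : (fun n => x (mIntegral m (F n) A))
        = fun n => sIntegral (dualApply m x) (F n) A :=
      funext fun n => mIntegral_spec (hF n) hA x
    rw [h2] at h1
    exact tendsto_nhds_unique h1 (hsint A hA x)
  · rw [Metric.tendsto_atTop]
    intro ε hε
    obtain ⟨N, hN⟩ := key (ε / 2) (by positivity)
    refine ⟨N, fun n hn => ?_⟩
    rw [Real.dist_eq, sub_zero]
    have hnonneg : 0 ≤ mNorm m (fun ω => F n ω - f ω) :=
      Real.iSup_nonneg fun x => integral_nonneg fun ω => abs_nonneg _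
    rw [abs_of_nonneg hnonneg]
    have hle : mNorm m (fun ω => F n ω - f ω) ≤ ε / 2 :=
      ciSup_le fun x => (hN n hn x.1 x.2).2
    linarith

end PaperLemmas

/-- if `fₙ → f` pointwise `‖m‖`-a.e. and `∫_A fₙ dm` converges in `X` for every
measurable `A`, then `f ∈ L¹(m)` and `fₙ → f` in the norm of `L¹(m)`. -/
theorem statement0
    {Ω : Type*} [MeasurableSpace Ω]
    {X : Type*} [NormedAddCommGroup X] [NormedSpace ℝ X] [CompleteSpace X]
    (m : VectorMeasure Ω X)
    (f : Ω → ℝ) (hf : Measurable f)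
    (F : ℕ → Ω → ℝ) (hF : ∀ n, MIntegrable m (F n))
    (hae : MAE m (fun ω => Tendsto (fun n => F n ω) atTop (nhds (f ω))))
    (hconv : ∀ A : Set Ω, MeasurableSet A →
      ∃ L : X, Tendsto (fun n => mIntegral m (F n) A) atTop (nhds L)) :
    MIntegrable m f ∧
      Tendsto (fun n => mNorm m (fun ω => F n ω - f ω)) atTop (nhds 0) := by
  exact statement0' m f hf F hF hae hconv

end Paper
end
end

section
/- Let X be a Banach function space over a finite measure space and m : Σ → X a σ-additive vector measure, with Rybakov control measure η. Suppose {fₙ} ⊆ L¹(m) is weakly null and fₙ = gₙ + hₙ, where for each n the functions gₙ and hₙ have disjoint supports, the sequence {gₙ} has uniformly a.c. norm in L¹(m) (with respect to η), and the functions {hₙ} have pairwise disjoint supports. Then both {gₙ} and {hₙ} are weakly null in L¹(m). -/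
open MeasureTheory Filter Topology
open scoped ENNReal

noncomputable section

namespace Paper

variable {Ω : Type*} [MeasurableSpace Ω]
variable {X : Type*} [NormedAddCommGroup X] [NormedSpace ℝ X]

variable {S : Type*} [MeasurableSpace S] {μ : Measure S}

section Aux

variable {Ω : Type*} [MeasurableSpace Ω]
variable {X : Type*} [NormedAddCommGroup X] [NormedSpace ℝ X]

theorem Aux.setIntegral_null {κ : Measure Ω} {A : Set Ω} (hA : κ A = 0) (φ : Ω → ℝ) :
    ∫ ω in A, φ ω ∂κ = 0 := by
  rw [Measure.restrict_eq_zero.2 hA]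
  exact integral_zero_measure φ

theorem Aux.mNorm_nonneg (m : VectorMeasure Ω X) (φ : Ω → ℝ) : 0 ≤ mNorm m φ :=
  Real.iSup_nonneg fun _ => integral_nonneg fun _ => abs_nonneg _

theorem Aux.sIntegral_def (s : SignedMeasure Ω) (φ : Ω → ℝ) (A : Set Ω) :
    sIntegral s φ A = (∫ ω in A, φ ω ∂s.toJordanDecomposition.posPart) -
      ∫ ω in A, φ ω ∂s.toJordanDecomposition.negPart := rfl

theorem Aux.MIntegrable.indicator {m : VectorMeasure Ω X} {φ : Ω → ℝ}
    (hφ : MIntegrable m φ) {B : Set Ω} (hB : MeasurableSet B) :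
    MIntegrable m (B.indicator φ) := by
  obtain ⟨hmeas, hint, hex⟩ := hφ
  refine ⟨hmeas.indicator hB, fun x => (hint x).indicator hB, fun A hA => ?_⟩
  obtain ⟨v, hv⟩ := hex (A ∩ B) (hA.inter hB)
  refine ⟨v, fun x => ?_⟩
  rw [hv x, Aux.sIntegral_def, Aux.sIntegral_def,
    setIntegral_indicator hB, setIntegral_indicator hB]

/-- Key uniform boundedness fact: for an `m`-integrable `φ`, the family of integrals
`∫ |φ| d|x*m|` over the unit ball of the dual is bounded above. -/
theorem Aux.mNorm_bddAbove [CompleteSpace X] (m : VectorMeasure Ω X) {φ : Ω → ℝ}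
    (hφ : MIntegrable m φ) :
    BddAbove (Set.range fun x : {x : X →L[ℝ] ℝ // ‖x‖ ≤ 1} =>
      ∫ ω, |φ ω| ∂(dualApply m x.1).totalVariation) := by
  classical
  obtain ⟨hmeas, hint, hex⟩ := hφ
  -- the "vector integrals" of φ
  set V : Set X := {v | ∃ A : Set Ω, MeasurableSet A ∧
      ∀ x : X →L[ℝ] ℝ, x v = sIntegral (dualApply m x) φ A} with hV
  have hpt : ∀ x : X →L[ℝ] ℝ, ∀ v ∈ V, |x v| ≤ ∫ ω, |φ ω| ∂(dualApply m x).totalVariation := by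
    intro x v hv
    obtain ⟨A, hA, hvA⟩ := hv
    have h1 : Integrable φ ((dualApply m x).toJordanDecomposition.posPart +
        (dualApply m x).toJordanDecomposition.negPart) := hint x
    have hpos := h1.left_of_add_measure
    have hneg := h1.right_of_add_measure
    have e1 : |∫ ω in A, φ ω ∂(dualApply m x).toJordanDecomposition.posPart| ≤
        ∫ ω, |φ ω| ∂(dualApply m x).toJordanDecomposition.posPart := by
      refine le_trans ?_ (setIntegral_le_integral (s := A) hpos.abs
        (Filter.Eventually.of_forall fun ω => abs_nonneg _))
      simpa [Real.norm_eq_abs] using norm_integral_le_integral_norm (μ := ((dualApply m x).toJordanDecomposition.posPart).restrict A) φ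
    have e2 : |∫ ω in A, φ ω ∂(dualApply m x).toJordanDecomposition.negPart| ≤
        ∫ ω, |φ ω| ∂(dualApply m x).toJordanDecomposition.negPart := by
      refine le_trans ?_ (setIntegral_le_integral (s := A) hneg.abs
        (Filter.Eventually.of_forall fun ω => abs_nonneg _))
      simpa [Real.norm_eq_abs] using norm_integral_le_integral_norm (μ := ((dualApply m x).toJordanDecomposition.negPart).restrict A) φ
    have etv : ∫ ω, |φ ω| ∂(dualApply m x).totalVariation =
        (∫ ω, |φ ω| ∂(dualApply m x).toJordanDecomposition.posPart) +
          ∫ ω, |φ ω| ∂(dualApply m x).toJordanDecomposition.negPart :=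
      integral_add_measure hpos.abs hneg.abs
    rw [hvA x, Aux.sIntegral_def, etv]
    calc |(∫ ω in A, φ ω ∂(dualApply m x).toJordanDecomposition.posPart) -
          ∫ ω in A, φ ω ∂(dualApply m x).toJordanDecomposition.negPart|
        ≤ |∫ ω in A, φ ω ∂(dualApply m x).toJordanDecomposition.posPart| +
          |∫ ω in A, φ ω ∂(dualApply m x).toJordanDecomposition.negPart| := abs_sub _ _
      _ ≤ _ := add_le_add e1 e2
  -- Banach–Steinhaus for the double-dual images of V
  obtain ⟨C', hC'⟩ : ∃ C', ∀ v : V, ‖(NormedSpace.inclusionInDoubleDual ℝ X) v.1‖ ≤ C' := by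
    apply banach_steinhaus
    intro x
    exact ⟨∫ ω, |φ ω| ∂(dualApply m x).totalVariation, fun v => by
      simpa [Real.norm_eq_abs] using hpt x v.1 v.2⟩
  set M := max C' 0 with hM
  have hMnn : (0:ℝ) ≤ M := le_max_right _ _
  have hVnorm : ∀ v ∈ V, ‖v‖ ≤ M := by
    intro v hv
    refine NormedSpace.norm_le_dual_bound ℝ v hMnn fun ψ => ?_
    calc ‖ψ v‖ = ‖(NormedSpace.inclusionInDoubleDual ℝ X) v ψ‖ := rfl
      _ ≤ ‖(NormedSpace.inclusionInDoubleDual ℝ X) v‖ * ‖ψ‖ := ContinuousLinearMap.le_opNorm _ _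
      _ ≤ M * ‖ψ‖ := by
          gcongr
          exact (hC' ⟨v, hv⟩).trans (le_max_left _ _)
  refine ⟨4 * M, ?_⟩
  rintro r ⟨x, rfl⟩
  set s := dualApply m x.1 with hs
  have h1 : Integrable φ (s.toJordanDecomposition.posPart +
      s.toJordanDecomposition.negPart) := hint x.1
  have hpos := h1.left_of_add_measure
  have hneg := h1.right_of_add_measure
  obtain ⟨t, htm, htpos, htneg⟩ := s.toJordanDecomposition.mutuallySingular
  set P := tᶜ with hPdef
  have hPm : MeasurableSet P := htm.compl
  have hnegP : s.toJordanDecomposition.negPart P = 0 := htneg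
  have hposPc : s.toJordanDecomposition.posPart Pᶜ = 0 := by
    rwa [hPdef, compl_compl]
  have hsI : ∀ A : Set Ω, MeasurableSet A → |sIntegral s φ A| ≤ M := by
    intro A hA
    obtain ⟨v, hv⟩ := hex A hA
    rw [hs, ← hv x.1]
    calc |x.1 v| ≤ ‖x.1‖ * ‖v‖ := by
          simpa [Real.norm_eq_abs] using x.1.le_opNorm v
      _ ≤ 1 * M := mul_le_mul x.2 (hVnorm v ⟨A, hA, hv⟩) (norm_nonneg _) zero_le_one
      _ = M := one_mul M
  have hposEq : ∀ A : Set Ω, MeasurableSet A →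
      ∫ ω in A, φ ω ∂s.toJordanDecomposition.posPart = sIntegral s φ (A ∩ P) := by
    intro A hA
    have h2 : ∫ ω in A ∩ P, φ ω ∂s.toJordanDecomposition.negPart = 0 :=
      Aux.setIntegral_null (measure_mono_null Set.inter_subset_right hnegP) φ
    have h3 : (∫ ω in A ∩ P, φ ω ∂s.toJordanDecomposition.posPart) +
        ∫ ω in A \ P, φ ω ∂s.toJordanDecomposition.posPart =
        ∫ ω in A, φ ω ∂s.toJordanDecomposition.posPart :=
      integral_inter_add_diff hPm hpos.integrableOn
    have h4 : ∫ ω in A \ P, φ ω ∂s.toJordanDecomposition.posPart = 0 :=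
      Aux.setIntegral_null (measure_mono_null (fun ω hω => hω.2) hposPc) φ
    rw [Aux.sIntegral_def, h2, sub_zero, ← h3, h4, add_zero]
  have hnegEq : ∀ A : Set Ω, MeasurableSet A →
      ∫ ω in A, φ ω ∂s.toJordanDecomposition.negPart = -sIntegral s φ (A ∩ Pᶜ) := by
    intro A hA
    have h2 : ∫ ω in A ∩ Pᶜ, φ ω ∂s.toJordanDecomposition.posPart = 0 :=
      Aux.setIntegral_null (measure_mono_null Set.inter_subset_right hposPc) φ
    have h3 : (∫ ω in A ∩ Pᶜ, φ ω ∂s.toJordanDecomposition.negPart) +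
        ∫ ω in A \ Pᶜ, φ ω ∂s.toJordanDecomposition.negPart =
        ∫ ω in A, φ ω ∂s.toJordanDecomposition.negPart :=
      integral_inter_add_diff hPm.compl hneg.integrableOn
    have h4 : ∫ ω in A \ Pᶜ, φ ω ∂s.toJordanDecomposition.negPart = 0 := by
      refine Aux.setIntegral_null (measure_mono_null (fun ω hω => ?_) hnegP) φ
      have := hω.2
      simpa using this
    rw [Aux.sIntegral_def, h2, zero_sub, neg_neg, ← h3, h4, add_zero]
  have key : ∀ κ : Measure Ω, Integrable φ κ →
      (∀ A : Set Ω, MeasurableSet A → |∫ ω in A, φ ω ∂κ| ≤ M) →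
      ∫ ω, |φ ω| ∂κ ≤ 2 * M := by
    intro κ hκ hbd
    set Q : Set Ω := {ω | 0 ≤ φ ω} with hQ
    have hQm : MeasurableSet Q := measurableSet_le measurable_const hmeas
    have e1 : (∫ ω in Q, |φ ω| ∂κ) + ∫ ω in Qᶜ, |φ ω| ∂κ = ∫ ω, |φ ω| ∂κ :=
      integral_add_compl hQm hκ.abs
    have e2 : ∫ ω in Q, |φ ω| ∂κ = ∫ ω in Q, φ ω ∂κ :=
      setIntegral_congr_fun hQm fun ω hω => abs_of_nonneg hω
    have e3 : ∫ ω in Qᶜ, |φ ω| ∂κ = -∫ ω in Qᶜ, φ ω ∂κ := by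
      rw [← integral_neg]
      exact setIntegral_congr_fun hQm.compl fun ω hω => abs_of_neg (not_le.1 hω)
    have b1 := hbd Q hQm
    have b2 := hbd Qᶜ hQm.compl
    have a1 : ∫ ω in Q, φ ω ∂κ ≤ M := le_trans (le_abs_self _) b1
    have a2 : -∫ ω in Qᶜ, φ ω ∂κ ≤ M := le_trans (neg_le_abs _) b2
    calc ∫ ω, |φ ω| ∂κ = (∫ ω in Q, φ ω ∂κ) + -∫ ω in Qᶜ, φ ω ∂κ := by
          rw [← e1, e2, e3]
      _ ≤ M + M := add_le_add a1 a2
      _ = 2 * M := by ring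
  have hx1 : ∫ ω, |φ ω| ∂s.toJordanDecomposition.posPart ≤ 2 * M := by
    refine key _ hpos fun A hA => ?_
    rw [hposEq A hA]
    exact hsI _ (hA.inter hPm)
  have hx2 : ∫ ω, |φ ω| ∂s.toJordanDecomposition.negPart ≤ 2 * M := by
    refine key _ hneg fun A hA => ?_
    rw [hnegEq A hA, abs_neg]
    exact hsI _ (hA.inter hPm.compl)
  have etv : ∫ ω, |φ ω| ∂s.totalVariation =
      (∫ ω, |φ ω| ∂s.toJordanDecomposition.posPart) +
        ∫ ω, |φ ω| ∂s.toJordanDecomposition.negPart :=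
    integral_add_measure hpos.abs hneg.abs
  calc ∫ ω, |φ ω| ∂(dualApply m x.1).totalVariation =
      (∫ ω, |φ ω| ∂s.toJordanDecomposition.posPart) +
        ∫ ω, |φ ω| ∂s.toJordanDecomposition.negPart := by rw [← hs, etv]
    _ ≤ 2 * M + 2 * M := add_le_add hx1 hx2
    _ = 4 * M := by ring

theorem Aux.mNorm_indicator_le [CompleteSpace X] (m : VectorMeasure Ω X) {φ : Ω → ℝ}
    (hφ : MIntegrable m φ) {B : Set Ω} (hB : MeasurableSet B) :
    mNorm m (B.indicator φ) ≤ mNorm m φ := by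
  have hne : Nonempty {x : X →L[ℝ] ℝ // ‖x‖ ≤ 1} := ⟨⟨0, by simp⟩⟩
  refine ciSup_le fun x => ?_
  have h1 : ∫ ω, |B.indicator φ ω| ∂(dualApply m x.1).totalVariation ≤
      ∫ ω, |φ ω| ∂(dualApply m x.1).totalVariation := by
    refine integral_mono ((hφ.2.1 x.1).indicator hB).abs (hφ.2.1 x.1).abs fun ω => ?_
    by_cases hω : ω ∈ B
    · simp [Set.indicator_of_mem hω]
    · simp [Set.indicator_of_notMem hω, abs_nonneg]
  exact h1.trans (le_ciSup (Aux.mNorm_bddAbove m hφ) x)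

theorem Aux.indicator_functional [CompleteSpace X] {m : VectorMeasure Ω X}
    {T : (Ω → ℝ) → ℝ} (hT : IsBddLinFunctional (MIntegrable m) (mNorm m) T)
    {B : Set Ω} (hB : MeasurableSet B) :
    IsBddLinFunctional (MIntegrable m) (mNorm m) fun φ => T (B.indicator φ) := by
  obtain ⟨hadd, hsmul, C, hC⟩ := hT
  refine ⟨fun φ ψ hφ hψ => ?_, fun c φ hφ => ?_, max C 0, fun φ hφ => ?_⟩
  · show T (B.indicator (φ + ψ)) = T (B.indicator φ) + T (B.indicator ψ)
    have hind : B.indicator (φ + ψ) = B.indicator φ + B.indicator ψ := by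
      funext ω; by_cases hω : ω ∈ B <;> simp [Set.indicator, hω]
    rw [hind]
    exact hadd _ _ (Aux.MIntegrable.indicator hφ hB) (Aux.MIntegrable.indicator hψ hB)
  · show T (B.indicator (c • φ)) = c * T (B.indicator φ)
    have hind : B.indicator (c • φ) = c • B.indicator φ := by
      funext ω; by_cases hω : ω ∈ B <;> simp [Set.indicator, hω]
    rw [hind]
    exact hsmul c _ (Aux.MIntegrable.indicator hφ hB)
  · show |T (B.indicator φ)| ≤ max C 0 * mNorm m φ
    calc |T (B.indicator φ)| ≤ C * mNorm m (B.indicator φ) :=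
        hC _ (Aux.MIntegrable.indicator hφ hB)
      _ ≤ max C 0 * mNorm m φ :=
        mul_le_mul (le_max_left _ _) (Aux.mNorm_indicator_le m hφ hB)
          (Aux.mNorm_nonneg m _) (le_max_right _ _)

end Aux


/-- if a weakly null sequence in `L¹(m)` splits as `fₙ = gₙ + hₙ` with disjoint
supports, `{gₙ}` of uniformly a.c. norm and `{hₙ}` pairwise disjointly supported, then both
`{gₙ}` and `{hₙ}` are weakly null in `L¹(m)`. -/
theorem statement8
    {S : Type*} [MeasurableSpace S] {μ : Measure S} [IsFiniteMeasure μ]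
    {X : Type*} [NormedAddCommGroup X] [NormedSpace ℝ X] [CompleteSpace X]
    (B : BFS S μ X)
    {Ω : Type*} [MeasurableSpace Ω] (m : VectorMeasure Ω X)
    (x₀ : X →L[ℝ] ℝ)
    (hRyb : ∀ A : Set Ω, MeasurableSet A →
      ((dualApply m x₀).totalVariation A = 0 ↔ semivar m A = 0))
    (f g h : ℕ → Ω → ℝ)
    (hf : ∀ n, MIntegrable m (f n)) (hg : ∀ n, MIntegrable m (g n))
    (hh : ∀ n, MIntegrable m (h n))
    (hwn : WeaklyNullSeq (MIntegrable m) (mNorm m) f)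
    (hsplit : ∀ n, f n = g n + h n)
    (hdisj : ∀ n, MAE m (fun ω => g n ω * h n ω = 0))
    (hgUAC : UnifACNorm ((dualApply m x₀).totalVariation) (mNorm m) (Set.range g))
    (hhdisj : ∀ i j, i ≠ j → MAE m (fun ω => h i ω * h j ω = 0)) :
    WeaklyNullSeq (MIntegrable m) (mNorm m) g ∧
      WeaklyNullSeq (MIntegrable m) (mNorm m) h := by
  classical
  have hηfin : IsFiniteMeasure (dualApply m x₀).totalVariation := by
    show IsFiniteMeasure ((dualApply m x₀).toJordanDecomposition.posPart +
      (dualApply m x₀).toJordanDecomposition.negPart)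
    infer_instance
  set η := (dualApply m x₀).totalVariation with hηdef
  set A : ℕ → Set Ω := fun n => Function.support (h n) with hAdef
  have hAmeas : ∀ n, MeasurableSet (A n) := by
    intro n
    show MeasurableSet (Function.support (h n))
    rw [Function.support_eq_preimage]
    exact (hh n).1 (measurableSet_singleton 0).compl
  have hAdisj : ∀ i j, i ≠ j → η (A i ∩ A j) = 0 := by
    intro i j hij
    obtain ⟨N, hNm, hN0, hNP⟩ := hhdisj i j hij
    refine measure_mono_null (fun ω hω => ?_) ((hRyb N hNm).2 hN0)
    by_contra hωN
    have h0 := hNP ω hωN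
    rcases mul_eq_zero.1 h0 with h1 | h1
    · exact hω.1 h1
    · exact hω.2 h1
  have hfin : ∑' n, η (A n) ≠ ⊤ := by
    have hle : ∀ s : Finset ℕ, ∑ n ∈ s, η (A n) ≤ η Set.univ := by
      intro s
      rw [← measure_biUnion_finset₀ (fun i _ j _ hij => hAdisj i j hij)
        (fun b _ => (hAmeas b).nullMeasurableSet)]
      exact measure_mono (Set.subset_univ _)
    rw [ENNReal.tsum_eq_iSup_sum]
    exact ne_top_of_le_ne_top (measure_ne_top η _) (iSup_le hle)
  set Bs : ℕ → Set Ω := fun N => ⋃ k, A (k + N) with hBdef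
  have hBmeas : ∀ N, MeasurableSet (Bs N) := fun N => MeasurableSet.iUnion fun k => hAmeas _
  have hBsmall : Tendsto (fun N => η (Bs N)) atTop (nhds 0) := by
    have h1 := ENNReal.tendsto_sum_nat_add (fun n => η (A n)) hfin
    have h2 : ∀ N, η (Bs N) ≤ ∑' k, η (A (k + N)) := fun N => measure_iUnion_le _
    exact tendsto_of_tendsto_of_tendsto_of_le_of_le tendsto_const_nhds h1
      (fun N => zero_le) h2
  have hsub : ∀ N n, N ≤ n → A n ⊆ Bs N := by
    intro N n hn ω hω
    exact Set.mem_iUnion.2 ⟨n - N, by rwa [Nat.sub_add_cancel hn]⟩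
  -- h is weakly null
  have hWNh : WeaklyNullSeq (MIntegrable m) (mNorm m) h := by
    intro T hT
    rw [Metric.tendsto_atTop]
    intro ε hε
    obtain ⟨C₀, hC₀⟩ := hT.2.2
    set C := max C₀ 0 with hCdef
    have hCnn : (0:ℝ) ≤ C := le_max_right _ _
    have hCb : ∀ φ, MIntegrable m φ → |T φ| ≤ C * mNorm m φ := fun φ hφ =>
      (hC₀ φ hφ).trans (mul_le_mul_of_nonneg_right (le_max_left _ _) (Aux.mNorm_nonneg m φ))
    set ε₁ := ε / (2 * (C + 1)) with hε₁def
    have hε₁pos : 0 < ε₁ := div_pos hε (by linarith)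
    obtain ⟨δ, hδpos, hδ⟩ := hgUAC ε₁ hε₁pos
    have hev : ∀ᶠ N in atTop, η (Bs N) < ENNReal.ofReal δ :=
      hBsmall.eventually_lt_const (by simpa using ENNReal.ofReal_pos.2 hδpos)
    obtain ⟨N₁, hN₁⟩ := hev.exists
    have hSmeas := hBmeas N₁
    have hTB := Aux.indicator_functional hT hSmeas
    have hTBf := hwn _ hTB
    rw [Metric.tendsto_atTop] at hTBf
    have hhalf : (0:ℝ) < ε / 2 := by linarith
    obtain ⟨N₂, hN₂⟩ := hTBf (ε / 2) hhalf
    refine ⟨max N₁ N₂, fun n hn => ?_⟩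
    have hn1 : N₁ ≤ n := le_trans (le_max_left _ _) hn
    have hn2 : N₂ ≤ n := le_trans (le_max_right _ _) hn
    have hind : (Bs N₁).indicator (h n) = h n :=
      Set.indicator_eq_self.2 (hsub N₁ n hn1)
    have hfgh : (Bs N₁).indicator (f n) =
        (Bs N₁).indicator (g n) + (Bs N₁).indicator (h n) := by
      rw [hsplit n]; funext ω
      by_cases hω : ω ∈ Bs N₁ <;> simp [Set.indicator, hω]
    have hTsplit : T ((Bs N₁).indicator (f n)) = T ((Bs N₁).indicator (g n)) + T (h n) := by
      rw [hfgh, hind]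
      exact hT.1 _ _ (Aux.MIntegrable.indicator (hg n) hSmeas) (hh n)
    have hgbound : |T ((Bs N₁).indicator (g n))| ≤ C * ε₁ := by
      have hmn : mNorm m ((Bs N₁).indicator (g n)) ≤ ε₁ := hδ _ hSmeas hN₁ (g n) ⟨n, rfl⟩
      exact (hCb _ (Aux.MIntegrable.indicator (hg n) hSmeas)).trans
        (mul_le_mul_of_nonneg_left hmn hCnn)
    have hCe : C * ε₁ ≤ ε / 2 := by
      rw [hε₁def, mul_div_assoc']
      rw [div_le_div_iff₀ (by linarith) (by norm_num)]
      nlinarith [hε.le]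
    have hfsmall : |T ((Bs N₁).indicator (f n))| < ε / 2 := by
      have := hN₂ n hn2
      rw [Real.dist_eq, sub_zero] at this
      exact this
    have : |T (h n)| < ε := by
      have heq : T (h n) = T ((Bs N₁).indicator (f n)) - T ((Bs N₁).indicator (g n)) := by
        linarith [hTsplit]
      rw [heq]
      calc |T ((Bs N₁).indicator (f n)) - T ((Bs N₁).indicator (g n))| ≤
          |T ((Bs N₁).indicator (f n))| + |T ((Bs N₁).indicator (g n))| := abs_sub _ _
        _ < ε / 2 + ε / 2 := add_lt_add_of_lt_of_le hfsmall (hgbound.trans hCe)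
        _ = ε := by ring
    rw [Real.dist_eq, sub_zero]
    exact this
  refine ⟨?_, hWNh⟩
  intro T hT
  have h1 := hwn T hT
  have h2 := hWNh T hT
  have heq : ∀ n, T (g n) = T (f n) - T (h n) := by
    intro n
    have h3 := hT.1 (g n) (h n) (hg n) (hh n)
    rw [← hsplit n] at h3
    linarith
  have h4 := h1.sub h2
  rw [sub_zero] at h4
  exact h4.congr fun n => (heq n).symm


end Paper
end
end

section
/- Let X be a Banach space and m : Σ → X a σ-additive vector measure. If {hₙ} ⊆ L¹(m) is weakly null and the functions hₙ have pairwise disjoint supports, then {|hₙ|} is weakly null in L¹(m). -/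
open MeasureTheory Filter Topology
open scoped ENNReal

noncomputable section

namespace Paper

variable {Ω : Type*} [MeasurableSpace Ω]
variable {X : Type*} [NormedAddCommGroup X] [NormedSpace ℝ X]

variable {S : Type*} [MeasurableSpace S] {μ : Measure S}

section Aux

variable {Ω : Type*} [MeasurableSpace Ω]
variable {X : Type*} [NormedAddCommGroup X] [NormedSpace ℝ X]

lemma tv_smul_null {s : SignedMeasure Ω} {N : Set Ω} (c : ℝ) (hc : 0 ≤ c)
    (hs : s.totalVariation N = 0) : (c • s).totalVariation N = 0 := by
  rw [SignedMeasure.totalVariation, Measure.add_apply, add_eq_zero] at hs ⊢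
  rw [SignedMeasure.toJordanDecomposition_smul_real,
    JordanDecomposition.real_smul_posPart_nonneg _ _ hc,
    JordanDecomposition.real_smul_negPart_nonneg _ _ hc]
  simp [hs.1, hs.2]

/-- If the semivariation of `N` vanishes, the total variation of every `x* m` vanishes
on `N`, for every (not necessarily norm-one) functional `x*`. -/
lemma tv_null_of_semivar_zero {m : VectorMeasure Ω X} {N : Set Ω}
    (hN : semivar m N = 0) (x : X →L[ℝ] ℝ) :
    (dualApply m x).totalVariation N = 0 := by
  have key : ∀ y : X →L[ℝ] ℝ, ‖y‖ ≤ 1 → (dualApply m y).totalVariation N = 0 := by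
    intro y hy
    have h := le_iSup (fun z : {x : X →L[ℝ] ℝ // ‖x‖ ≤ 1} =>
      (dualApply m z.1).totalVariation N) ⟨y, hy⟩
    exact le_antisymm (h.trans_eq hN) zero_le
  by_cases hx : x = 0
  · have h0 : dualApply m x = 0 := by
      apply VectorMeasure.ext
      intro A _
      rw [dualApply_apply, hx]
      rfl
    rw [h0, SignedMeasure.totalVariation_zero]
    rfl
  · have hxn : (0:ℝ) < ‖x‖ := norm_pos_iff.mpr hx
    set y := ‖x‖⁻¹ • x with hy
    have hyn : ‖y‖ ≤ 1 := by
      rw [hy, norm_smul (‖x‖⁻¹) x]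
      simp [inv_mul_cancel₀ hxn.ne']
    have hxy : x = ‖x‖ • y := by
      rw [hy, smul_smul, mul_inv_cancel₀ hxn.ne', one_smul]
    rw [hxy, dualApply_smul]
    exact tv_smul_null _ hxn.le (key y hyn)

lemma posPart_le_tv (s : SignedMeasure Ω) :
    s.toJordanDecomposition.posPart ≤ s.totalVariation :=
  Measure.le_add_right le_rfl

lemma negPart_le_tv (s : SignedMeasure Ω) :
    s.toJordanDecomposition.negPart ≤ s.totalVariation :=
  Measure.le_add_left le_rfl

/-- The zero function is `m`-integrable. -/
lemma mIntegrable_zero (m : VectorMeasure Ω X) : MIntegrable m (fun _ => (0:ℝ)) := by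
  refine ⟨measurable_const, fun x => integrable_zero _ _ _, fun A hA => ⟨0, fun x => ?_⟩⟩
  simp [sIntegral]

/-- If `f` is `m`-integrable and `g` is measurable and agrees with `f` off an `m`-null
set, then `g` is `m`-integrable and has the same `sIntegral`s. -/
lemma mIntegrable_of_ae_eq {m : VectorMeasure Ω X} {f g : Ω → ℝ} {N : Set Ω}
    (hf : MIntegrable m f) (hg : Measurable g)
    (hN : semivar m N = 0) (hfg : ∀ ω ∉ N, g ω = f ω) :
    MIntegrable m g ∧
      ∀ (x : X →L[ℝ] ℝ) (A : Set Ω),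
        sIntegral (dualApply m x) g A = sIntegral (dualApply m x) f A := by
  have hae : ∀ (x : X →L[ℝ] ℝ) (μ : Measure Ω), μ ≤ (dualApply m x).totalVariation →
      g =ᵐ[μ] f := by
    intro x μ hμ
    have hsub : {ω | ¬ g ω = f ω} ⊆ N := by
      intro ω hω
      by_contra hωN
      exact hω (hfg ω hωN)
    have : μ N = 0 := le_antisymm (le_trans (hμ N) (tv_null_of_semivar_zero hN x).le)
      zero_le
    exact measure_mono_null hsub this
  have hint : ∀ x : X →L[ℝ] ℝ, Integrable g ((dualApply m x).totalVariation) :=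
    fun x => (hf.2.1 x).congr ((hae x _ le_rfl).symm)
  have hsInt : ∀ (x : X →L[ℝ] ℝ) (A : Set Ω),
      sIntegral (dualApply m x) g A = sIntegral (dualApply m x) f A := by
    intro x A
    unfold sIntegral
    have h1 : g =ᵐ[(dualApply m x).toJordanDecomposition.posPart.restrict A] f :=
      ae_restrict_of_ae (hae x _ (posPart_le_tv _))
    have h2 : g =ᵐ[(dualApply m x).toJordanDecomposition.negPart.restrict A] f :=
      ae_restrict_of_ae (hae x _ (negPart_le_tv _))
    rw [integral_congr_ae h1, integral_congr_ae h2]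
  refine ⟨⟨hg, hint, fun A hA => ?_⟩, hsInt⟩
  obtain ⟨v, hv⟩ := hf.2.2 A hA
  exact ⟨v, fun x => (hv x).trans (hsInt x A).symm⟩

/-- Multiplying by a `±1`-valued measurable function preserves `m`-integrability. -/
lemma mIntegrable_umul {m : VectorMeasure Ω X} {f u : Ω → ℝ}
    (hu1 : Measurable u) (hu2 : ∀ ω, u ω = 1 ∨ u ω = -1) (hf : MIntegrable m f) :
    MIntegrable m (fun ω => u ω * f ω) := by
  set E : Set Ω := u ⁻¹' {(-1:ℝ)} with hEdef
  have hE : MeasurableSet E := hu1 (measurableSet_singleton _)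
  have habs : ∀ ω, |u ω * f ω| = |f ω| := by
    intro ω
    rw [abs_mul]
    rcases hu2 ω with h | h <;> simp [h]
  have hmeas : Measurable fun ω => u ω * f ω := hu1.mul hf.1
  have hint : ∀ x : X →L[ℝ] ℝ, Integrable (fun ω => u ω * f ω)
      ((dualApply m x).totalVariation) := by
    intro x
    refine Integrable.mono' (hf.2.1 x).abs hmeas.aestronglyMeasurable
      (Filter.Eventually.of_forall fun ω => ?_)
    rw [Real.norm_eq_abs, habs ω]
  refine ⟨hmeas, hint, fun A hA => ?_⟩
  obtain ⟨v₁, hv₁⟩ := hf.2.2 (A ∩ Eᶜ) (hA.inter hE.compl)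
  obtain ⟨v₂, hv₂⟩ := hf.2.2 (A ∩ E) (hA.inter hE)
  refine ⟨v₁ - v₂, fun x => ?_⟩
  have hsplit : ∀ μ : Measure Ω, μ ≤ (dualApply m x).totalVariation →
      ∫ ω in A, u ω * f ω ∂μ = (∫ ω in A ∩ Eᶜ, f ω ∂μ) - ∫ ω in A ∩ E, f ω ∂μ := by
    intro μ hμ
    have hufi : Integrable (fun ω => u ω * f ω) μ := (hint x).mono_measure hμ
    have hunion : A = (A ∩ Eᶜ) ∪ (A ∩ E) := by
      rw [← Set.inter_union_distrib_left, Set.compl_union_self, Set.inter_univ]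
    have hdisj : Disjoint (A ∩ Eᶜ) (A ∩ E) :=
      Set.disjoint_of_subset Set.inter_subset_right Set.inter_subset_right
        disjoint_compl_left
    have hsplit0 : ∫ ω in A, u ω * f ω ∂μ
        = (∫ ω in A ∩ Eᶜ, u ω * f ω ∂μ) + ∫ ω in A ∩ E, u ω * f ω ∂μ := by
      conv_lhs => rw [hunion]
      exact setIntegral_union hdisj (hA.inter hE) hufi.integrableOn hufi.integrableOn
    have h1 : ∫ ω in A ∩ Eᶜ, u ω * f ω ∂μ = ∫ ω in A ∩ Eᶜ, f ω ∂μ := by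
      refine setIntegral_congr_fun (hA.inter hE.compl) fun ω hω => ?_
      have hωE : ω ∉ E := hω.2
      have : u ω = 1 := by
        rcases hu2 ω with h | h
        · exact h
        · exact absurd (by simp [hEdef, h]) hωE
      simp [this]
    have h2 : ∫ ω in A ∩ E, u ω * f ω ∂μ = ∫ ω in A ∩ E, -(f ω) ∂μ := by
      refine setIntegral_congr_fun (hA.inter hE) fun ω hω => ?_
      have hωE : u ω = -1 := hω.2
      simp [hωE]
    rw [hsplit0, h1, h2, integral_neg]
    ring
  rw [map_sub, hv₁ x, hv₂ x]
  unfold sIntegral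
  rw [hsplit _ (posPart_le_tv _), hsplit _ (negPart_le_tv _)]
  ring

/-- `mNorm` only depends on the absolute value of the function. -/
lemma mNorm_congr_abs (m : VectorMeasure Ω X) {f g : Ω → ℝ}
    (h : ∀ ω, |f ω| = |g ω|) : mNorm m f = mNorm m g := by
  unfold mNorm
  congr 1
  funext x
  congr 1
  funext ω
  exact h ω

lemma mNorm_zero_of_ae {m : VectorMeasure Ω X} {f : Ω → ℝ} {N : Set Ω}
    (hN : semivar m N = 0) (hf : ∀ ω ∉ N, f ω = 0) : mNorm m f = 0 := by
  have key : ∀ x : {x : X →L[ℝ] ℝ // ‖x‖ ≤ 1},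
      ∫ ω, |f ω| ∂(dualApply m x.1).totalVariation = 0 := by
    intro x
    have hae : (fun ω => |f ω|) =ᵐ[(dualApply m x.1).totalVariation] 0 := by
      have hsub : {ω | ¬ |f ω| = 0} ⊆ N := by
        intro ω hω
        by_contra hωN
        exact hω (by rw [hf ω hωN]; simp)
      exact measure_mono_null hsub (tv_null_of_semivar_zero hN x.1)
    rw [integral_congr_ae hae]
    simp
  unfold mNorm
  haveI : Nonempty {x : X →L[ℝ] ℝ // ‖x‖ ≤ 1} := ⟨⟨0, by simp⟩⟩
  rw [show (fun x : {x : X →L[ℝ] ℝ // ‖x‖ ≤ 1} =>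
    ∫ ω, |f ω| ∂(dualApply m x.1).totalVariation) = fun _ => (0:ℝ) from funext key]
  exact ciSup_const

end Aux

/-- if `{hₙ} ⊆ L¹(m)` is weakly null with pairwise disjoint supports, then
`{|hₙ|}` is weakly null in `L¹(m)`. -/
theorem statement9
    {Ω : Type*} [MeasurableSpace Ω]
    {X : Type*} [NormedAddCommGroup X] [NormedSpace ℝ X] [CompleteSpace X]
    (m : VectorMeasure Ω X)
    (h : ℕ → Ω → ℝ) (hh : ∀ n, MIntegrable m (h n))
    (hwn : WeaklyNullSeq (MIntegrable m) (mNorm m) h)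
    (hdisj : ∀ i j, i ≠ j → MAE m (fun ω => h i ω * h j ω = 0)) :
    WeaklyNullSeq (MIntegrable m) (mNorm m) (fun n ω => |h n ω|) := by
  classical
  -- A single `m`-null set off which all the disjointness conditions hold.
  obtain ⟨N, hNmeas, hNnull, hNprop⟩ : ∃ N : Set Ω, MeasurableSet N ∧ semivar m N = 0 ∧
      ∀ ω ∉ N, ∀ i j, i ≠ j → h i ω * h j ω = 0 := by
    have hset : ∀ p : ℕ × ℕ, ∃ Np : Set Ω, MeasurableSet Np ∧ semivar m Np = 0 ∧
        (p.1 ≠ p.2 → ∀ ω ∉ Np, h p.1 ω * h p.2 ω = 0) := by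
      intro p
      by_cases hp : p.1 ≠ p.2
      · obtain ⟨Np, h1, h2, h3⟩ := hdisj p.1 p.2 hp
        exact ⟨Np, h1, h2, fun _ => h3⟩
      · refine ⟨∅, MeasurableSet.empty, ?_, fun hc => absurd hc hp⟩
        refine le_antisymm (iSup_le fun x => ?_) zero_le
        simp
    choose F hF1 hF2 hF3 using hset
    refine ⟨⋃ p, F p, MeasurableSet.iUnion hF1, ?_, ?_⟩
    · refine le_antisymm (iSup_le fun x => ?_) zero_le
      calc (dualApply m x.1).totalVariation (⋃ p, F p)
          ≤ ∑' p, (dualApply m x.1).totalVariation (F p) := measure_iUnion_le _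
        _ = 0 := by
            have : ∀ p, (dualApply m x.1).totalVariation (F p) = 0 :=
              fun p => tv_null_of_semivar_zero (hF2 p) x.1
            simp [this]
    · intro ω hω i j hij
      exact hF3 (i, j) hij ω fun hmem => hω (Set.mem_iUnion.mpr ⟨(i, j), hmem⟩)
  -- The sign function `u`.
  set E : Set Ω := ⋃ n, {ω | h n ω < 0} with hEdef
  have hE : MeasurableSet E :=
    MeasurableSet.iUnion fun n => measurableSet_lt (hh n).1 measurable_const
  set u : Ω → ℝ := fun ω => if ω ∈ E then -1 else 1 with hudef
  have hu1 : Measurable u := Measurable.ite hE measurable_const measurable_const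
  have hu2 : ∀ ω, u ω = 1 ∨ u ω = -1 := by
    intro ω
    by_cases hω : ω ∈ E <;> simp [hudef, hω]
  -- Off `N`, `|hₙ| = u * hₙ`.
  have key : ∀ n, ∀ ω ∉ N, |h n ω| = u ω * h n ω := by
    intro n ω hω
    rcases lt_trichotomy (h n ω) 0 with hlt | heq | hgt
    · have hωE : ω ∈ E := Set.mem_iUnion.mpr ⟨n, hlt⟩
      simp [hudef, hωE, abs_of_neg hlt]
    · simp [heq]
    · have hωE : ω ∉ E := by
        intro hmem
        obtain ⟨k, hk⟩ := Set.mem_iUnion.mp hmem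
        have hk' : h k ω < 0 := hk
        have hkn : k ≠ n := by
          intro hEq; rw [hEq] at hk'; exact absurd hgt (not_lt.mpr hk'.le)
        exact mul_ne_zero hk'.ne hgt.ne' (hNprop ω hω k n hkn)
      simp [hudef, hωE, abs_of_pos hgt]
  -- Membership facts.
  have humem : ∀ n, MIntegrable m (fun ω => u ω * h n ω) :=
    fun n => mIntegrable_umul hu1 hu2 (hh n)
  set d : ℕ → Ω → ℝ := fun n ω => |h n ω| - u ω * h n ω with hddef
  have hdzero : ∀ n, ∀ ω ∉ N, d n ω = 0 := by
    intro n ω hω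
    simp [hddef, key n ω hω]
  have hdmeas : ∀ n, Measurable (d n) :=
    fun n => ((hh n).1.abs).sub (hu1.mul (hh n).1)
  have hdmem : ∀ n, MIntegrable m (d n) := by
    intro n
    exact (mIntegrable_of_ae_eq (mIntegrable_zero m) (hdmeas n) hNnull
      (fun ω hω => hdzero n ω hω)).1
  have hdnorm : ∀ n, mNorm m (d n) = 0 :=
    fun n => mNorm_zero_of_ae hNnull (hdzero n)
  -- The functional argument.
  intro T hT
  obtain ⟨C, hC⟩ := hT.2.2
  set S : (Ω → ℝ) → ℝ := fun f => T (fun ω => u ω * f ω) with hSdef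
  have hSbdd : IsBddLinFunctional (MIntegrable m) (mNorm m) S := by
    refine ⟨?_, ?_, ⟨C, ?_⟩⟩
    · intro f g hf hg
      have heq : (fun ω => u ω * (f + g) ω)
          = (fun ω => u ω * f ω) + (fun ω => u ω * g ω) := by
        funext ω
        simp only [Pi.add_apply]
        ring
      show T (fun ω => u ω * (f + g) ω) = _
      rw [heq]
      exact hT.1 _ _ (mIntegrable_umul hu1 hu2 hf) (mIntegrable_umul hu1 hu2 hg)
    · intro c f hf
      have heq : (fun ω => u ω * (c • f) ω) = c • (fun ω => u ω * f ω) := by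
        funext ω
        simp only [Pi.smul_apply, smul_eq_mul]
        ring
      show T (fun ω => u ω * (c • f) ω) = _
      rw [heq]
      exact hT.2.1 c _ (mIntegrable_umul hu1 hu2 hf)
    · intro f hf
      have hmn : mNorm m (fun ω => u ω * f ω) = mNorm m f := by
        refine mNorm_congr_abs m fun ω => ?_
        rw [abs_mul]
        rcases hu2 ω with hω | hω <;> simp [hω]
      calc |S f| = |T (fun ω => u ω * f ω)| := rfl
        _ ≤ C * mNorm m (fun ω => u ω * f ω) := hC _ (mIntegrable_umul hu1 hu2 hf)
        _ = C * mNorm m f := by rw [hmn]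
  have htend : Tendsto (fun n => S (h n)) atTop (nhds 0) := hwn S hSbdd
  refine htend.congr fun n => ?_
  -- `T |hₙ| = S hₙ`.
  have hTd : T (d n) = 0 := by
    have h1 : |T (d n)| ≤ C * mNorm m (d n) := hC _ (hdmem n)
    rw [hdnorm n, mul_zero] at h1
    exact abs_eq_zero.mp (le_antisymm h1 (abs_nonneg _))
  have heq : (fun ω => |h n ω|) = (fun ω => u ω * h n ω) + d n := by
    funext ω
    simp only [Pi.add_apply, hddef]
    ring
  calc S (h n) = T (fun ω => u ω * h n ω) := rfl
    _ = T (fun ω => u ω * h n ω) + T (d n) := by rw [hTd, add_zero]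
    _ = T ((fun ω => u ω * h n ω) + d n) := (hT.1 _ _ (humem n) (hdmem n)).symm
    _ = T (fun ω => |h n ω|) := by rw [← heq]

end Paper
end
end
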